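/- arXiv:2009.09061 — 2 statements merged into one kernel-verified Lean document; each statement's English description precedes it below -/
import Mathlib

section
/- Let r ≥ 1 be an integer, and let P be the generating function of the set of Dyck paths none of whose up-run lengths and none of whose down-run lengths lies in {1, 2, …, r}. Then, as formal power series, P + z·P = 1 + z^{r+1}·P + z·P^2. -/
/-- The height of a path (list of up/down steps, `true` = up = +1, `false` = down = −1)
after its first `k` steps. -/
def heightAt (p : List Bool) (k : ℕ) : ℤ :=
  ((p.take k).count true : ℤ) - ((p.take k).count false : ℤ)

/-- A Dyck path: all partial sums nonnegative and total sum zero. -/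
def IsDyck (p : List Bool) : Prop :=
  (∀ k, 0 ≤ heightAt p k) ∧ heightAt p p.length = 0

/-- A peak at height `h`: an up-step immediately followed by a down-step,
the height after the up-step being `h`. -/
def HasPeakAt (p : List Bool) (h : ℤ) : Prop :=
  ∃ i, p[i]? = some true ∧ p[i+1]? = some false ∧ heightAt p (i+1) = h

/-- A valley at height `h`: a down-step immediately followed by an up-step,
the height after the down-step being `h`. -/
def HasValleyAt (p : List Bool) (h : ℤ) : Prop :=
  ∃ i, p[i]? = some false ∧ p[i+1]? = some true ∧ heightAt p (i+1) = h

/-- `p` has an up-run of length `m`: a maximal block of exactly `m` consecutive up-steps. -/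
def HasUpRun (p : List Bool) (m : ℕ) : Prop :=
  ∃ i, (∀ j, j < m → p[i+j]? = some true) ∧
    (i = 0 ∨ p[i-1]? = some false) ∧
    (p[i+m]? = some false ∨ i + m = p.length)

/-- `p` has a down-run of length `m`: a maximal block of exactly `m` consecutive down-steps. -/
def HasDownRun (p : List Bool) (m : ℕ) : Prop :=
  ∃ i, (∀ j, j < m → p[i+j]? = some false) ∧
    (i = 0 ∨ p[i-1]? = some true) ∧
    (p[i+m]? = some true ∨ i + m = p.length)

/-- Generating function of the set of Dyck paths satisfying `Q`:
the coefficient of `z^n` is the number of such paths of semilength `n`. -/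
noncomputable def genFun (Q : List Bool → Prop) : PowerSeries ℕ :=
  PowerSeries.mk fun n => Set.ncard {p : List Bool | p.length = 2 * n ∧ IsDyck p ∧ Q p}

namespace S13

lemma count_tf (p : List Bool) : p.count true + p.count false = p.length := by
  induction p with
  | nil => rfl
  | cons a l ih =>
    cases a <;> simp [List.count_cons] <;> omega

lemma heightAt_zero (p : List Bool) : heightAt p 0 = 0 := by simp [heightAt]

lemma heightAt_of_le (p : List Bool) {k : ℕ} (h : p.length ≤ k) :
    heightAt p k = heightAt p p.length := by
  simp [heightAt, List.take_of_length_le h, List.take_length]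

lemma heightAt_succ (p : List Bool) {k : ℕ} (h : k < p.length) :
    heightAt p (k+1) = heightAt p k + (if p[k] then 1 else -1) := by
  have h1 : p.take (k+1) = p.take k ++ [p[k]] := by
    rw [List.take_succ, List.getElem?_eq_getElem h]; rfl
  rcases hb : p[k] <;>
    simp [heightAt, h1, List.count_append, hb] <;> push_cast <;> ring

lemma heightAt_succ' (p : List Bool) {k : ℕ} {b : Bool} (h : p[k]? = some b) :
    heightAt p (k+1) = heightAt p k + (if b then 1 else -1) := by
  have hk : k < p.length := by
    by_contra hk
    simp [List.getElem?_eq_none (Nat.le_of_not_lt hk)] at h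
  have := heightAt_succ p hk
  rw [List.getElem?_eq_getElem hk] at h
  simp only [Option.some.injEq] at h
  rw [this, h]

lemma heightAt_append_left {xs ys : List Bool} {k : ℕ} (h : k ≤ xs.length) :
    heightAt (xs ++ ys) k = heightAt xs k := by
  simp [heightAt, List.take_append_of_le_length h]

lemma heightAt_append {xs ys : List Bool} (k : ℕ) :
    heightAt (xs ++ ys) (xs.length + k) = heightAt xs xs.length + heightAt ys k := by
  have : (xs ++ ys).take (xs.length + k) = xs ++ ys.take k := by
    simp [List.take_append]
  simp [heightAt, this, List.count_append, List.take_length]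
  push_cast; ring

end S13

namespace S13

lemma heightAt_succ_true {p : List Bool} {k : ℕ} (h : p[k]? = some true) :
    heightAt p (k+1) = heightAt p k + 1 := by simpa using heightAt_succ' p h

lemma heightAt_succ_false {p : List Bool} {k : ℕ} (h : p[k]? = some false) :
    heightAt p (k+1) = heightAt p k - 1 := by
  have := heightAt_succ' p h; simp at this; omega

lemma isDyck_nil : IsDyck [] := by
  constructor
  · intro k; simp [heightAt]
  · simp [heightAt]

lemma heightAt_length (p : List Bool) :
    heightAt p p.length = (p.count true : ℤ) - (p.count false : ℤ) := by
  simp [heightAt, List.take_length]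

lemma count_eq_of_dyck {p : List Bool} (h : IsDyck p) : p.count true = p.count false := by
  have := h.2; rw [heightAt_length] at this; omega

lemma length_eq_two_mul {p : List Bool} (h : IsDyck p) : p.length = 2 * p.count true := by
  have h1 := count_eq_of_dyck h
  have h2 := count_tf p
  omega

lemma head_true {p : List Bool} (h : IsDyck p) (hp : p ≠ []) : p[0]? = some true := by
  have hl : 0 < p.length := List.length_pos_iff.2 hp
  have h0 : p[0]? = some p[0] := List.getElem?_eq_getElem hl
  rcases hb : p[0]
  · have := heightAt_succ' p (hb ▸ h0)
    have h1 := h.1 1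
    rw [heightAt_zero] at this; simp at this; omega
  · exact hb ▸ h0

lemma getLast_false {p : List Bool} (h : IsDyck p) (hp : p ≠ []) :
    p[p.length - 1]? = some false := by
  have hl : 0 < p.length := List.length_pos_iff.2 hp
  have h0 : p[p.length - 1]? = some p[p.length - 1] := List.getElem?_eq_getElem (by omega)
  rcases hb : p[p.length - 1]
  · exact hb ▸ h0
  · have hstep := heightAt_succ' p (hb ▸ h0)
    have h1 := h.1 (p.length - 1)
    have h2 := h.2
    have he : p.length - 1 + 1 = p.length := by omega
    rw [he] at hstep
    simp at hstep; omega

lemma isDyck_append {xs ys : List Bool} (h1 : IsDyck xs) (h2 : IsDyck ys) :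
    IsDyck (xs ++ ys) := by
  constructor
  · intro k
    rcases le_or_gt k xs.length with hk | hk
    · rw [heightAt_append_left hk]; exact h1.1 k
    · have : k = xs.length + (k - xs.length) := by omega
      rw [this, heightAt_append, h1.2]
      simpa using h2.1 _
  · have : (xs ++ ys).length = xs.length + ys.length := by simp
    rw [this, heightAt_append, h1.2, h2.2]; ring

lemma heightAt_take (p : List Bool) (t k : ℕ) :
    heightAt (p.take t) k = heightAt p (min k t) := by
  simp [heightAt, List.take_take]

lemma heightAt_drop (p : List Bool) {t : ℕ} (ht : t ≤ p.length) (k : ℕ) :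
    heightAt (p.drop t) k = heightAt p (t + k) - heightAt p t := by
  have hsplit : p = p.take t ++ p.drop t := (List.take_append_drop t p).symm
  have hlen : (p.take t).length = t := List.length_take_of_le ht
  have := heightAt_append (xs := p.take t) (ys := p.drop t) k
  rw [← hsplit, hlen] at this
  rw [this, heightAt_take]
  simp [Nat.min_self, min_eq_left ht]

lemma isDyck_take {p : List Bool} (h : IsDyck p) {t : ℕ} (ht0 : heightAt p t = 0) :
    IsDyck (p.take t) := by
  constructor
  · intro k; rw [heightAt_take]; exact h.1 _
  · rcases le_or_gt t p.length with ht | ht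
    · rw [List.length_take, min_eq_left ht, heightAt_take, Nat.min_self]; exact ht0
    · rw [List.take_of_length_le (le_of_lt ht)]
      exact h.2

lemma isDyck_drop {p : List Bool} (h : IsDyck p) {t : ℕ} (ht : t ≤ p.length)
    (ht0 : heightAt p t = 0) : IsDyck (p.drop t) := by
  constructor
  · intro k; rw [heightAt_drop p ht, ht0]; have := h.1 (t + k); omega
  · rw [List.length_drop, heightAt_drop p ht, ht0]
    have : t + (p.length - t) = p.length := by omega
    rw [this, h.2]; ring

end S13

namespace S13

lemma lt_len {p : List Bool} {k : ℕ} {b : Bool} (h : p[k]? = some b) : k < p.length := by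
  by_contra hk
  simp [List.getElem?_eq_none (Nat.le_of_not_lt hk)] at h

lemma app_get_lo {p q : List Bool} {k : ℕ} (h : k < p.length) : (p ++ q)[k]? = p[k]? := by
  simp [List.getElem?_append, h]

lemma app_get_hi {p q : List Bool} {k : ℕ} (h : p.length ≤ k) :
    (p ++ q)[k]? = q[k - p.length]? := by
  simp [List.getElem?_append, Nat.not_lt.2 h]

lemma hasUpRun_append {p₁ p₂ : List Bool}
    (h1 : p₁[p₁.length - 1]? = some false)
    (h2 : p₂ = [] ∨ p₂[0]? = some true) {m : ℕ} (hm : 1 ≤ m) :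
    HasUpRun (p₁ ++ p₂) m ↔ HasUpRun p₁ m ∨ HasUpRun p₂ m := by
  have hL : 0 < p₁.length := by have := lt_len h1; omega
  have hlen : (p₁ ++ p₂).length = p₁.length + p₂.length := by simp
  constructor
  · rintro ⟨i, hel, hl, hr⟩
    rcases le_or_gt (i + m) p₁.length with hA | hAB
    · -- run inside p₁
      left
      refine ⟨i, fun j hj => ?_, ?_, ?_⟩
      · rw [← app_get_lo (q := p₂) (by omega)]; exact hel j hj
      · rcases hl with h | h
        · exact Or.inl h
        · right; rw [← app_get_lo (q := p₂) (by omega)]; exact h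
      · rcases eq_or_lt_of_le hA with h | h
        · exact Or.inr h
        · rcases hr with hr | hr
          · left; rw [← app_get_lo (q := p₂) h]; exact hr
          · omega
    · rcases le_or_gt p₁.length i with hB | hC
      · -- run inside p₂
        right
        refine ⟨i - p₁.length, fun j hj => ?_, ?_, ?_⟩
        · have := hel j hj
          rwa [app_get_hi (by omega), show i + j - p₁.length = i - p₁.length + j by omega]
            at this
        · rcases eq_or_lt_of_le hB with h | h
          · left; omega
          · rcases hl with h' | h'
            · omega
            · right
              rwa [app_get_hi (by omega),
                show i - 1 - p₁.length = i - p₁.length - 1 by omega] at h'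
        · rcases hr with hr | hr
          · left
            rwa [app_get_hi (by omega),
              show i + m - p₁.length = i - p₁.length + m by omega] at hr
          · right; omega
      · -- straddle: impossible
        exfalso
        have hj : p₁.length - 1 - i < m := by omega
        have := hel _ hj
        rw [show i + (p₁.length - 1 - i) = p₁.length - 1 by omega,
          app_get_lo (by omega), h1] at this
        simp at this
  · rintro (⟨i, hel, hl, hr⟩ | ⟨i, hel, hl, hr⟩)
    · -- from p₁
      have him : i + m ≤ p₁.length := by
        rcases hr with hr | hr
        · exact le_of_lt (lt_len hr)
        · omega
      refine ⟨i, fun j hj => ?_, ?_, ?_⟩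
      · rw [app_get_lo (by omega)]; exact hel j hj
      · rcases hl with h | h
        · exact Or.inl h
        · right; rw [app_get_lo (by omega)]; exact h
      · rcases hr with hr | hr
        · left; rw [app_get_lo (lt_len hr)]; exact hr
        · rcases h2 with h2 | h2
          · right; subst h2; simpa using hr
          · exfalso
            have := hel (m - 1) (by omega)
            rw [show i + (m - 1) = p₁.length - 1 by omega, h1] at this
            simp at this
    · -- from p₂
      have hne : p₂ ≠ [] := by
        intro h; subst h
        rcases hr with hr | hr
        · exact absurd (lt_len hr) (by simp)
        · have := hel 0 (by omega); simp at this
      refine ⟨p₁.length + i, fun j hj => ?_, ?_, ?_⟩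
      · rw [app_get_hi (by omega), show p₁.length + i + j - p₁.length = i + j by omega]
        exact hel j hj
      · right
        rcases Nat.eq_zero_or_pos i with h0 | h0
        · subst h0
          rw [show p₁.length + 0 - 1 = p₁.length - 1 by omega, app_get_lo (by omega)]
          exact h1
        · rcases hl with h | h
          · omega
          · rw [app_get_hi (by omega), show p₁.length + i - 1 - p₁.length = i - 1 by omega]
            exact h
      · rcases hr with hr | hr
        · left
          rw [app_get_hi (by omega), show p₁.length + i + m - p₁.length = i + m by omega]
          exact hr
        · right; omega

end S13

namespace S13

lemma hasDownRun_append {p₁ p₂ : List Bool}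
    (h1 : p₁[p₁.length - 1]? = some false)
    (h2 : p₂ = [] ∨ p₂[0]? = some true) {m : ℕ} (hm : 1 ≤ m) :
    HasDownRun (p₁ ++ p₂) m ↔ HasDownRun p₁ m ∨ HasDownRun p₂ m := by
  have hL : 0 < p₁.length := by have := lt_len h1; omega
  have hlen : (p₁ ++ p₂).length = p₁.length + p₂.length := by simp
  constructor
  · rintro ⟨i, hel, hl, hr⟩
    rcases le_or_gt (i + m) p₁.length with hA | hAB
    · -- run inside p₁
      left
      refine ⟨i, fun j hj => ?_, ?_, ?_⟩
      · rw [← app_get_lo (q := p₂) (by omega)]; exact hel j hj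
      · rcases hl with h | h
        · exact Or.inl h
        · right; rw [← app_get_lo (q := p₂) (by omega)]; exact h
      · rcases eq_or_lt_of_le hA with h | h
        · exact Or.inr h
        · rcases hr with hr | hr
          · left; rw [← app_get_lo (q := p₂) h]; exact hr
          · omega
    · have hne : p₂ ≠ [] := by
        intro h; subst h
        simp only [List.append_nil] at hr hel
        rcases hr with hr | hr
        · have := lt_len hr; omega
        · omega
      have h2' : p₂[0]? = some true := h2.resolve_left hne
      rcases le_or_gt p₁.length i with hB | hC
      · -- run inside p₂
        right
        have hiL : p₁.length < i := by
          rcases eq_or_lt_of_le hB with h | h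
          · exfalso
            rcases hl with h' | h'
            · omega
            · rw [← h, app_get_lo (by omega), h1] at h'; simp at h'
          · exact h
        refine ⟨i - p₁.length, fun j hj => ?_, ?_, ?_⟩
        · have := hel j hj
          rwa [app_get_hi (by omega), show i + j - p₁.length = i - p₁.length + j by omega]
            at this
        · rcases hl with h' | h'
          · omega
          · right
            rwa [app_get_hi (by omega),
              show i - 1 - p₁.length = i - p₁.length - 1 by omega] at h'
        · rcases hr with hr | hr
          · left
            rwa [app_get_hi (by omega),
              show i + m - p₁.length = i - p₁.length + m by omega] at hr
          · right; omega
      · -- straddle: impossible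
        exfalso
        have hj : p₁.length - i < m := by omega
        have := hel _ hj
        rw [show i + (p₁.length - i) = p₁.length by omega,
          app_get_hi (by omega)] at this
        simp only [Nat.sub_self] at this
        rw [h2'] at this; simp at this
  · rintro (⟨i, hel, hl, hr⟩ | ⟨i, hel, hl, hr⟩)
    · -- from p₁
      have him : i + m ≤ p₁.length := by
        rcases hr with hr | hr
        · exact le_of_lt (lt_len hr)
        · omega
      refine ⟨i, fun j hj => ?_, ?_, ?_⟩
      · rw [app_get_lo (by omega)]; exact hel j hj
      · rcases hl with h | h
        · exact Or.inl h
        · right; rw [app_get_lo (by omega)]; exact h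
      · rcases hr with hr | hr
        · left; rw [app_get_lo (lt_len hr)]; exact hr
        · rcases h2 with h2 | h2
          · right; subst h2; simpa using hr
          · left
            rw [app_get_hi (by omega), hr]
            simpa using h2
    · -- from p₂
      have hne : p₂ ≠ [] := by
        intro h; subst h
        rcases hr with hr | hr
        · exact absurd (lt_len hr) (by simp)
        · have := hel 0 (by omega); simp at this
      have hi0 : 0 < i := by
        rcases Nat.eq_zero_or_pos i with h0 | h0
        · exfalso
          have := hel 0 (by omega)
          rw [h0] at this; simp at this
          rw [this] at h2
          simpa using h2.resolve_left hne
        · exact h0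
      refine ⟨p₁.length + i, fun j hj => ?_, ?_, ?_⟩
      · rw [app_get_hi (by omega), show p₁.length + i + j - p₁.length = i + j by omega]
        exact hel j hj
      · right
        rcases hl with h | h
        · omega
        · rw [app_get_hi (by omega), show p₁.length + i - 1 - p₁.length = i - 1 by omega]
          exact h
      · rcases hr with hr | hr
        · left
          rw [app_get_hi (by omega), show p₁.length + i + m - p₁.length = i + m by omega]
          exact hr
        · right; omega

/-- no-short-runs property -/
def NoLow (r : ℕ) (p : List Bool) : Prop :=
  ∀ m : ℕ, 1 ≤ m → m ≤ r → ¬ HasUpRun p m ∧ ¬ HasDownRun p m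

lemma noLow_append {r : ℕ} {p₁ p₂ : List Bool}
    (h1 : p₁[p₁.length - 1]? = some false)
    (h2 : p₂ = [] ∨ p₂[0]? = some true) :
    NoLow r (p₁ ++ p₂) ↔ NoLow r p₁ ∧ NoLow r p₂ := by
  constructor
  · intro h
    constructor <;> intro m h1m hmr <;> have := h m h1m hmr <;>
      rw [hasUpRun_append h1 h2 h1m, hasDownRun_append h1 h2 h1m] at this <;>
      tauto
  · rintro ⟨ha, hb⟩ m h1m hmr
    rw [hasUpRun_append h1 h2 h1m, hasDownRun_append h1 h2 h1m]
    have := ha m h1m hmr; have := hb m h1m hmr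
    tauto

end S13

namespace S13

/-- wrap a path in an up-step and a down-step -/
def wrap (q : List Bool) : List Bool := true :: (q ++ [false])

lemma wrap_len (q : List Bool) : (wrap q).length = q.length + 2 := by simp [wrap]

lemma wrap_get0 (q : List Bool) : (wrap q)[0]? = some true := by simp [wrap]

lemma wrap_get_mid {q : List Bool} {k : ℕ} (h : k < q.length) : (wrap q)[k+1]? = q[k]? := by
  simp only [wrap, List.getElem?_cons_succ]
  exact app_get_lo h

lemma wrap_get_last (q : List Bool) : (wrap q)[q.length+1]? = some false := by
  simp only [wrap, List.getElem?_cons_succ]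
  rw [app_get_hi (le_refl _)]
  simp

lemma wrap_get_true {q : List Bool} {k : ℕ} (h : (wrap q)[k+1]? = some true) :
    q[k]? = some true ∧ k < q.length := by
  have hk : k + 1 < q.length + 2 := by have := lt_len h; rwa [wrap_len] at this
  rcases lt_or_ge k q.length with h1 | h1
  · rw [wrap_get_mid h1] at h; exact ⟨h, h1⟩
  · exfalso
    have : k = q.length := by omega
    subst this
    rw [wrap_get_last] at h; simp at h

lemma wrap_get_false {q : List Bool} {k : ℕ} (h : (wrap q)[k+1]? = some false) :
    k = q.length ∨ (q[k]? = some false ∧ k < q.length) := by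
  have hk : k + 1 < q.length + 2 := by have := lt_len h; rwa [wrap_len] at this
  rcases lt_or_ge k q.length with h1 | h1
  · rw [wrap_get_mid h1] at h; exact Or.inr ⟨h, h1⟩
  · left; omega

lemma wrap_height {q : List Bool} {k : ℕ} (h : k ≤ q.length) :
    heightAt (wrap q) (k+1) = heightAt q k + 1 := by
  have : wrap q = [true] ++ (q ++ [false]) := rfl
  rw [this, show k + 1 = [true].length + k by simp [Nat.add_comm]]
  rw [heightAt_append, heightAt_append_left (by simpa using h)]
  have h1 : heightAt [true] [true].length = 1 := by simp [heightAt]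
  rw [h1]; ring

lemma wrap_height_top (q : List Bool) :
    heightAt (wrap q) (q.length + 2) = heightAt q q.length := by
  have h1 := heightAt_succ' (wrap q) (wrap_get_last q)
  rw [wrap_height (le_refl _)] at h1
  simp only [if_neg Bool.false_ne_true] at h1
  rw [show q.length + 1 + 1 = q.length + 2 by ring] at h1
  omega

lemma wrap_dyck {q : List Bool} (h : IsDyck q) : IsDyck (wrap q) := by
  constructor
  · intro k
    rcases Nat.eq_zero_or_pos k with h0 | h0
    · subst h0; simp [heightAt_zero]
    · rcases le_or_gt k (q.length + 1) with hk | hk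
      · obtain ⟨j, rfl⟩ : ∃ j, k = j + 1 := ⟨k - 1, by omega⟩
        rw [wrap_height (by omega)]
        have := h.1 j; omega
      · rw [heightAt_of_le _ (by rw [wrap_len]; omega), wrap_len, wrap_height_top, h.2]
  · rw [wrap_len, wrap_height_top, h.2]

def IsPrime (p : List Bool) : Prop :=
  p ≠ [] ∧ ∀ k, 0 < k → k < p.length → 0 < heightAt p k

lemma wrap_prime {q : List Bool} (h : IsDyck q) : IsPrime (wrap q) := by
  refine ⟨by simp [wrap], fun k h0 hk => ?_⟩
  rw [wrap_len] at hk
  obtain ⟨j, rfl⟩ : ∃ j, k = j + 1 := ⟨k - 1, by omega⟩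
  rw [wrap_height (by omega)]
  have := h.1 j; omega

end S13

namespace S13

lemma noLow_wrap {r : ℕ} {q : List Bool}
    (hq0 : q[0]? = some true) (hqL : q[q.length - 1]? = some false)
    (hnl : NoLow r q) : NoLow r (wrap q) := by
  have hL : 0 < q.length := lt_len hq0
  intro m hm1 hmr
  constructor
  · rintro ⟨i, hel, hl, hr⟩
    rcases Nat.eq_zero_or_pos i with rfl | hi
    · -- run at start of wrap q
      have hpm : (wrap q)[m]? = some false := by
        rcases hr with hr | hr
        · simpa using hr
        · exfalso
          rw [wrap_len] at hr
          have := hel (m-1) (by omega)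
          rw [show 0 + (m-1) = q.length + 1 by omega, wrap_get_last] at this
          simp at this
      have hm2 : 2 ≤ m := by
        rcases Nat.lt_or_ge m 2 with h | h
        · exfalso
          have hm1' : m = 1 := by omega
          rw [hm1', show (1:ℕ) = 0 + 1 by rfl, wrap_get_mid hL, hq0] at hpm
          simp at hpm
        · exact h
      refine absurd ?_ (hnl (m-1) (by omega) (by omega)).1
      refine ⟨0, fun j hj => ?_, Or.inl rfl, ?_⟩
      · have := hel (j+1) (by omega)
        rw [show 0 + (j+1) = (0+j) + 1 by omega] at this
        exact (wrap_get_true this).1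
      · rw [show m = (m-1) + 1 by omega] at hpm
        rcases wrap_get_false hpm with h | ⟨h, _⟩
        · right; omega
        · left; simpa using h
    · -- interior run
      have hl' : (wrap q)[i-1]? = some false := hl.resolve_left (by omega)
      have hi2 : 2 ≤ i := by
        rcases Nat.lt_or_ge i 2 with h | h
        · exfalso
          have : i = 1 := by omega
          rw [this] at hl'
          rw [wrap_get0] at hl'; simp at hl'
        · exact h
      have hiq : i - 2 < q.length := by
        have h0 := hel 0 (by omega)
        have := lt_len h0
        rw [wrap_len] at this
        rcases wrap_get_false (show (wrap q)[(i-2)+1]? = some false by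
          rwa [show i - 2 + 1 = i - 1 by omega]) with h | ⟨_, hlt⟩
        · exfalso
          have := hel 0 (by omega)
          rw [show i + 0 = i by omega] at this
          have hii : i = q.length + 2 := by omega
          have := lt_len this
          rw [wrap_len] at this; omega
        · exact hlt
      have hql : q[i-2]? = some false := by
        rcases wrap_get_false (show (wrap q)[(i-2)+1]? = some false by
          rwa [show i - 2 + 1 = i - 1 by omega]) with h | ⟨h, _⟩
        · omega
        · exact h
      refine absurd ?_ (hnl m hm1 hmr).1
      refine ⟨i - 1, fun j hj => ?_, Or.inr (by rwa [show i-1-1 = i-2 by omega]), ?_⟩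
      · have := hel j hj
        rw [show i + j = (i - 1 + j) + 1 by omega] at this
        exact (wrap_get_true this).1
      · rcases hr with hr | hr
        · rw [show i + m = (i - 1 + m) + 1 by omega] at hr
          rcases wrap_get_false hr with h | ⟨h, _⟩
          · right; omega
          · left; exact h
        · exfalso
          rw [wrap_len] at hr
          have := hel (m-1) (by omega)
          rw [show i + (m-1) = q.length + 1 by omega, wrap_get_last] at this
          simp at this
  · rintro ⟨i, hel, hl, hr⟩
    have hi : 0 < i := by
      rcases Nat.eq_zero_or_pos i with rfl | hi
      · have := hel 0 (by omega)
        rw [show (0:ℕ) + 0 = 0 by rfl, wrap_get0] at this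
        simp at this
      · exact hi
    have hl' : (wrap q)[i-1]? = some true := hl.resolve_left (by omega)
    rcases hr with hr | hr
    · -- block followed by a true: inside q
      have hend := wrap_get_true (show (wrap q)[(i+m-1)+1]? = some true by
        rwa [show i + m - 1 + 1 = i + m by omega])
      have hi2 : 2 ≤ i := by
        rcases Nat.lt_or_ge i 2 with h | h
        · exfalso
          have h1 : i = 1 := by omega
          have := hel 0 (by omega)
          rw [h1, show (1:ℕ) + 0 = 0 + 1 by rfl, wrap_get_mid hL, hq0] at this
          simp at this
        · exact h
      have hqleft : q[i-2]? = some true := by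
        have := wrap_get_true (show (wrap q)[(i-2)+1]? = some true by
          rwa [show i - 2 + 1 = i - 1 by omega])
        exact this.1
      refine absurd ?_ (hnl m hm1 hmr).2
      refine ⟨i - 1, fun j hj => ?_, Or.inr (by rwa [show i-1-1 = i-2 by omega]), ?_⟩
      · have := hel j hj
        rw [show i + j = (i - 1 + j) + 1 by omega] at this
        rcases wrap_get_false this with h | ⟨h, _⟩
        · exfalso; omega
        · exact h
      · left
        rw [show i - 1 + m = i + m - 1 by omega]
        exact hend.1
    · -- block ends at the very end of wrap q
      rw [wrap_len] at hr
      have hm2 : 2 ≤ m := by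
        rcases Nat.lt_or_ge m 2 with h | h
        · exfalso
          have h1 : m = 1 := by omega
          have hii : i = q.length + 1 := by omega
          rw [hii, show q.length + 1 - 1 = (q.length - 1) + 1 by omega,
            wrap_get_mid (by omega), hqL] at hl'
          simp at hl'
        · exact h
      have hi2 : 2 ≤ i := by
        rcases Nat.lt_or_ge i 2 with h | h
        · exfalso
          have h1 : i = 1 := by omega
          have := hel 0 (by omega)
          rw [h1, show (1:ℕ) + 0 = 0 + 1 by rfl, wrap_get_mid hL, hq0] at this
          simp at this
        · exact h
      have hqleft : q[i-2]? = some true := by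
        have := wrap_get_true (show (wrap q)[(i-2)+1]? = some true by
          rwa [show i - 2 + 1 = i - 1 by omega])
        exact this.1
      refine absurd ?_ (hnl (m-1) (by omega) (by omega)).2
      refine ⟨i - 1, fun j hj => ?_, Or.inr (by rwa [show i-1-1 = i-2 by omega]), ?_⟩
      · have := hel j (by omega)
        rw [show i + j = (i - 1 + j) + 1 by omega] at this
        rcases wrap_get_false this with h | ⟨h, _⟩
        · exfalso; omega
        · exact h
      · right; omega

end S13

namespace S13

lemma height_run_up {p : List Bool} {s a : ℕ}
    (h : ∀ j, j < a → p[s+j]? = some true) :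
    ∀ j, j ≤ a → heightAt p (s+j) = heightAt p s + j := by
  intro j hj
  induction j with
  | zero => simp
  | succ n ih =>
    have h1 := heightAt_succ_true (h n (by omega))
    rw [show s + (n+1) = (s + n) + 1 by ring, h1, ih (by omega)]
    push_cast; ring

lemma height_run_down {p : List Bool} {s a : ℕ}
    (h : ∀ j, j < a → p[s+j]? = some false) :
    ∀ j, j ≤ a → heightAt p (s+j) = heightAt p s - j := by
  intro j hj
  induction j with
  | zero => simp
  | succ n ih =>
    have h1 := heightAt_succ_false (h n (by omega))
    rw [show s + (n+1) = (s + n) + 1 by ring, h1, ih (by omega)]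
    push_cast; ring

/-- the pyramid of size r+1 -/
def pyr (r : ℕ) : List Bool := List.replicate (r+1) true ++ List.replicate (r+1) false

lemma pyr_len (r : ℕ) : (pyr r).length = 2*r + 2 := by simp [pyr]; ring

lemma pyr_get {r k : ℕ} :
    (pyr r)[k]? = if k < r + 1 then some true
      else if k < 2*r+2 then some false else none := by
  rcases lt_or_ge k (r+1) with h | h
  · rw [pyr, app_get_lo (by simpa using h), if_pos h]
    simp [List.getElem?_replicate, h]
  · rw [pyr, app_get_hi (by simpa using h), if_neg (by omega)]
    rcases lt_or_ge k (2*r+2) with h2 | h2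
    · rw [if_pos h2]
      simp only [List.length_replicate]
      rw [List.getElem?_replicate, if_pos (by omega)]
    · rw [if_neg (by omega)]
      simp only [List.length_replicate]
      rw [List.getElem?_replicate, if_neg (by omega)]

end S13

namespace S13

lemma q_get_to_p {q : List Bool} {k : ℕ} {b : Bool} (h : q[k]? = some b) :
    (wrap q)[k+1]? = some b := by rw [wrap_get_mid (lt_len h)]; exact h

lemma unwrap_head {r : ℕ} (hr : 1 ≤ r) {q : List Bool}
    (hnl : NoLow r (wrap q)) (hqne : q ≠ []) : q[0]? = some true := by
  have hL : 0 < q.length := List.length_pos_iff.2 hqne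
  obtain ⟨c, hc⟩ : ∃ c, q[0]? = some c := ⟨q[0], List.getElem?_eq_getElem hL⟩
  rcases c
  · exfalso
    refine absurd ?_ (hnl 1 le_rfl hr).1
    exact ⟨0, fun j hj => by simpa [show j = 0 by omega] using wrap_get0 q,
      Or.inl rfl, Or.inl (by simpa using q_get_to_p hc)⟩
  · exact hc

lemma unwrap_last {r : ℕ} (hr : 1 ≤ r) {q : List Bool}
    (hnl : NoLow r (wrap q)) (hqne : q ≠ []) : q[q.length - 1]? = some false := by
  have hL : 0 < q.length := List.length_pos_iff.2 hqne
  obtain ⟨c, hc⟩ : ∃ c, q[q.length - 1]? = some c :=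
    ⟨q[q.length - 1], List.getElem?_eq_getElem (by omega)⟩
  rcases c
  · exact hc
  · exfalso
    refine absurd ?_ (hnl 1 le_rfl hr).2
    refine ⟨q.length + 1, fun j hj => by
        simpa [show j = 0 by omega] using wrap_get_last q, ?_, ?_⟩
    · right
      have := q_get_to_p hc
      rwa [show q.length - 1 + 1 = q.length + 1 - 1 by omega] at this
    · right; rw [wrap_len]

lemma unwrap_dyck {q : List Bool} (hpd : IsDyck (wrap q)) (hpp : IsPrime (wrap q)) :
    IsDyck q := by
  have htot : heightAt q q.length = 0 := by
    rw [← wrap_height_top]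
    have := hpd.2; rwa [wrap_len] at this
  constructor
  · intro k
    rcases le_or_gt k q.length with hk | hk
    · have h1 := wrap_height (q := q) hk
      rcases Nat.eq_zero_or_pos k with rfl | hk0
      · simp [heightAt_zero]
      · have := hpp.2 (k+1) (by omega) (by rw [wrap_len]; omega)
        omega
    · rw [heightAt_of_le q (by omega)]; omega
  · exact htot

lemma pyramid_up {r : ℕ} {q : List Bool}
    (hpd : IsDyck (wrap q)) (hpp : IsPrime (wrap q))
    (hnl : NoLow r (wrap q)) (hnp : wrap q ≠ pyr r)
    (hel' : ∀ j, j < r+1 → (wrap q)[j]? = some true)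
    (hpm : (wrap q)[r+1]? = some false) : False := by
  have hptot : heightAt (wrap q) (q.length + 2) = 0 := by
    have := hpd.2; rwa [wrap_len] at this
  have hex : ∃ j, ¬ (wrap q)[r+1+j]? = some false :=
    ⟨q.length+1, by rw [List.getElem?_eq_none (by rw [wrap_len]; omega)]; simp⟩
  set c := Nat.find hex with hc
  have hcend : ¬ (wrap q)[r+1+c]? = some false := Nat.find_spec hex
  have helc : ∀ j, j < c → (wrap q)[r+1+j]? = some false :=
    fun j hj => of_not_not (Nat.find_min hex hj)
  have hc0 : 0 < c := by
    rcases Nat.eq_zero_or_pos c with h | h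
    · exfalso; apply hcend; rw [h]; simpa using hpm
    · exact h
  have hcb : r+1+c ≤ q.length+2 := by
    have := lt_len (helc (c-1) (by omega))
    rw [wrap_len] at this; omega
  have hdr : HasDownRun (wrap q) c := by
    refine ⟨r+1, helc, Or.inr (by simpa using hel' r (by omega)), ?_⟩
    rcases eq_or_lt_of_le hcb with h | h
    · right; rw [wrap_len]; omega
    · obtain ⟨b, hb⟩ : ∃ b, (wrap q)[r+1+c]? = some b :=
        ⟨(wrap q)[r+1+c]'(by rw [wrap_len]; omega), List.getElem?_eq_getElem (by rw [wrap_len]; omega)⟩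
      rcases b
      · exact absurd hb hcend
      · exact Or.inl hb
  have hcr : r+1 ≤ c := by
    by_contra hcon
    exact absurd hdr (hnl c hc0 (by omega)).2
  have hup_h : heightAt (wrap q) (r+1) = r+1 := by
    have := height_run_up (p := wrap q) (s := 0) (a := r+1)
      (fun j hj => by simpa using hel' j hj) (r+1) le_rfl
    simpa [heightAt_zero] using this
  have hdn_h : heightAt (wrap q) (r+1+c) = heightAt (wrap q) (r+1) - c :=
    height_run_down helc c le_rfl
  have heq : r+1+c = q.length+2 := by
    by_contra hne
    have := hpp.2 (r+1+c) (by omega) (by rw [wrap_len]; omega)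
    rw [hdn_h, hup_h] at this
    have : (c:ℤ) < r+1 := by omega
    have : c < r + 1 := by exact_mod_cast this
    omega
  have hceq : c = r+1 := by
    rw [heq, hptot, hup_h] at hdn_h
    have : (c:ℤ) = r+1 := by omega
    exact_mod_cast this
  apply hnp
  apply List.ext_getElem?
  intro k
  rw [pyr_get]
  rcases lt_or_ge k (r+1) with hk | hk
  · rw [if_pos hk]; exact hel' k hk
  · rcases lt_or_ge k (2*r+2) with hk2 | hk2
    · rw [if_neg (by omega), if_pos hk2]
      have := helc (k - (r+1)) (by omega)
      rwa [show r+1+(k-(r+1)) = k by omega] at this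
    · rw [if_neg (by omega), if_neg (by omega)]
      rw [List.getElem?_eq_none]
      rw [wrap_len]; omega

lemma pyramid_down {r : ℕ} {q : List Bool}
    (hpd : IsDyck (wrap q)) (hpp : IsPrime (wrap q))
    (hnl : NoLow r (wrap q)) (hnp : wrap q ≠ pyr r)
    {i : ℕ} (hi : 0 < i) (hiq : i + r = q.length)
    (hl' : q[i-1]? = some true)
    (hel : ∀ j, j < r → q[i+j]? = some false) : False := by
  have hptot : heightAt (wrap q) (q.length + 2) = 0 := by
    have := hpd.2; rwa [wrap_len] at this
  have hel'' : ∀ j, j < r+1 → (wrap q)[i+1+j]? = some false := by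
    intro j hj
    rcases Nat.lt_or_ge j r with hjr | hjr
    · have := q_get_to_p (hel j hjr)
      rwa [show i + j + 1 = i+1+j by omega] at this
    · rw [show i+1+j = q.length + 1 by omega]
      exact wrap_get_last q
  have hpi : (wrap q)[i]? = some true := by
    have := q_get_to_p hl'
    rwa [show i - 1 + 1 = i by omega] at this
  have hex : ∃ j, ¬ ((wrap q)[i-j]? = some true ∧ j < i+1) :=
    ⟨i+1, by rintro ⟨_, h⟩; omega⟩
  set a := Nat.find hex with ha
  have haend := Nat.find_spec hex
  rw [← ha] at haend
  have hela : ∀ j, j < a → (wrap q)[i-j]? = some true ∧ j < i+1 :=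
    fun j hj => of_not_not (Nat.find_min hex hj)
  have ha0 : 0 < a := by
    rcases Nat.eq_zero_or_pos a with h | h
    · exfalso; apply haend; rw [h]
      exact ⟨by simpa using hpi, by omega⟩
    · exact h
  have ha_le : a ≤ i+1 := by
    have := (hela (a-1) (by omega)).2; omega
  have hur : HasUpRun (wrap q) a := by
    refine ⟨i+1-a, fun j hj => ?_, ?_, Or.inl ?_⟩
    · have := (hela (a-1-j) (by omega)).1
      rwa [show i - (a-1-j) = i+1-a+j by omega] at this
    · rcases eq_or_lt_of_le ha_le with h | h
      · left; omega
      · right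
        obtain ⟨b, hb⟩ : ∃ b, (wrap q)[i-a]? = some b :=
          ⟨(wrap q)[i-a]'(by rw [wrap_len]; omega),
            List.getElem?_eq_getElem (by rw [wrap_len]; omega)⟩
        rcases b
        · rwa [show i+1-a-1 = i-a by omega]
        · exact absurd ⟨hb, by omega⟩ haend
    · rw [show i+1-a+a = i+1 by omega]
      have := hel'' 0 (by omega)
      rwa [show i+1+0 = i+1 by omega] at this
  have har : r+1 ≤ a := by
    by_contra hcon
    exact absurd hur (hnl a ha0 (by omega)).1
  have h1 : heightAt (wrap q) (i+1) = heightAt (wrap q) (i+1-a) + a := by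
    have := height_run_up (p := wrap q) (s := i+1-a) (a := a)
      (fun j hj => by
        have := (hela (a-1-j) (by omega)).1
        rwa [show i - (a-1-j) = i+1-a+j by omega] at this) a le_rfl
    rwa [show i+1-a+a = i+1 by omega] at this
  have h2 : heightAt (wrap q) (i+1+(r+1)) = heightAt (wrap q) (i+1) - (r+1) :=
    height_run_down hel'' (r+1) le_rfl
  rw [show i+1+(r+1) = q.length + 2 by omega, hptot] at h2
  have hia : i+1-a = 0 := by
    by_contra hne
    have := hpp.2 (i+1-a) (by omega) (by rw [wrap_len]; omega)
    rw [h1] at h2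
    have : (a:ℤ) > r+1 ∨ (a:ℤ) = r+1 ∨ (a:ℤ) < r+1 := by omega
    omega
  have haeq : a = i+1 := by omega
  have hir : i = r := by
    rw [h1, hia, heightAt_zero] at h2
    have : (a:ℤ) = r+1 := by omega
    have : a = r+1 := by exact_mod_cast this
    omega
  apply hnp
  apply List.ext_getElem?
  intro k
  rw [pyr_get]
  rcases lt_or_ge k (r+1) with hk | hk
  · rw [if_pos hk]
    have := (hela (i-k) (by omega)).1
    rwa [show i - (i-k) = k by omega] at this
  · rcases lt_or_ge k (2*r+2) with hk2 | hk2
    · rw [if_neg (by omega), if_pos hk2]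
      have := hel'' (k-(r+1)) (by omega)
      rwa [show i+1+(k-(r+1)) = k by omega] at this
    · rw [if_neg (by omega), if_neg (by omega)]
      rw [List.getElem?_eq_none]
      rw [wrap_len]; omega

end S13

namespace S13

theorem unwrap_noLow {r : ℕ} (hr : 1 ≤ r) {q : List Bool}
    (hpd : IsDyck (wrap q)) (hpp : IsPrime (wrap q))
    (hnl : NoLow r (wrap q)) (hnp : wrap q ≠ pyr r) (hqne : q ≠ []) :
    NoLow r q := by
  have hL : 0 < q.length := List.length_pos_iff.2 hqne
  have hq0 := unwrap_head hr hnl hqne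
  have hqL := unwrap_last hr hnl hqne
  have hqd := unwrap_dyck hpd hpp
  intro m hm1 hmr
  constructor
  · rintro ⟨i, hel, hl, hr'⟩
    rcases Nat.eq_zero_or_pos i with rfl | hi
    · rcases hr' with hq | hq
      · -- q[m]? = some false : p gets an up-run of length m+1 at 0
        simp only [Nat.zero_add] at hq hel
        have hmr' : m = r := by
          by_contra hne
          refine absurd ?_ (hnl (m+1) (by omega) (by omega)).1
          refine ⟨0, fun j hj => ?_, Or.inl rfl, Or.inl ?_⟩
          · rcases Nat.eq_zero_or_pos j with rfl | hj0
            · simpa using wrap_get0 q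
            · have := q_get_to_p (hel (j-1) (by omega))
              rwa [show j-1+1 = 0+j by omega] at this
          · simpa using q_get_to_p hq
        subst hmr'
        refine pyramid_up hpd hpp hnl hnp (fun j hj => ?_) (by simpa using q_get_to_p hq)
        rcases Nat.eq_zero_or_pos j with rfl | hj0
        · simpa using wrap_get0 q
        · have := q_get_to_p (hel (j-1) (by omega))
          rwa [show j-1+1 = j by omega] at this
      · -- 0 + m = q.length : impossible, q sums to zero
        simp only [Nat.zero_add] at hq hel
        have hru := height_run_up (p := q) (s := 0) (a := m)
          (fun j hj => by simpa using hel j hj) m le_rfl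
        simp only [Nat.zero_add, heightAt_zero] at hru
        rw [hq, hqd.2] at hru
        omega
    · have hl' : q[i-1]? = some false := hl.resolve_left (by omega)
      refine absurd ?_ (hnl m hm1 hmr).1
      refine ⟨i+1, fun j hj => ?_, Or.inr ?_, ?_⟩
      · have := q_get_to_p (hel j hj)
        rwa [show i + j + 1 = i + 1 + j by omega] at this
      · have := q_get_to_p hl'
        rwa [show i - 1 + 1 = i + 1 - 1 by omega] at this
      · rcases hr' with hq | hq
        · left
          have := q_get_to_p hq
          rwa [show i + m + 1 = i + 1 + m by omega] at this
        · left
          rw [show i + 1 + m = q.length + 1 by omega]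
          exact wrap_get_last q
  · rintro ⟨i, hel, hl, hr'⟩
    have hi : 0 < i := by
      rcases Nat.eq_zero_or_pos i with rfl | hi
      · exfalso
        have := hel 0 (by omega)
        simp only [Nat.add_zero, Nat.zero_add] at this
        rw [hq0] at this; simp at this
      · exact hi
    have hl' : q[i-1]? = some true := hl.resolve_left (by omega)
    rcases hr' with hq | hq
    · refine absurd ?_ (hnl m hm1 hmr).2
      refine ⟨i+1, fun j hj => ?_, Or.inr ?_, Or.inl ?_⟩
      · have := q_get_to_p (hel j hj)
        rwa [show i + j + 1 = i + 1 + j by omega] at this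
      · have := q_get_to_p hl'
        rwa [show i - 1 + 1 = i + 1 - 1 by omega] at this
      · have := q_get_to_p hq
        rwa [show i + m + 1 = i + 1 + m by omega] at this
    · -- i + m = q.length : run extends with the final down-step of p
      have hmr' : m = r := by
        by_contra hne
        refine absurd ?_ (hnl (m+1) (by omega) (by omega)).2
        refine ⟨i+1, fun j hj => ?_, Or.inr ?_, Or.inr (by rw [wrap_len]; omega)⟩
        · rcases Nat.lt_or_ge j m with hjm | hjm
          · have := q_get_to_p (hel j hjm)
            rwa [show i + j + 1 = i + 1 + j by omega] at this
          · rw [show i+1+j = q.length + 1 by omega]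
            exact wrap_get_last q
        · have := q_get_to_p hl'
          rwa [show i - 1 + 1 = i + 1 - 1 by omega] at this
      subst hmr'
      exact pyramid_down hpd hpp hnl hnp hi hq hl' hel

end S13

namespace S13

lemma pyr_height_le {r k : ℕ} (hk : k ≤ r+1) : heightAt (pyr r) k = k := by
  have := height_run_up (p := pyr r) (s := 0) (a := r+1)
    (fun j hj => by rw [Nat.zero_add, pyr_get, if_pos hj]) k hk
  simpa [heightAt_zero] using this

lemma pyr_height_ge {r k : ℕ} (hk : k ≤ r+1) :
    heightAt (pyr r) (r+1+k) = (r+1) - k := by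
  have := height_run_down (p := pyr r) (s := r+1) (a := r+1)
    (fun j hj => by rw [pyr_get, if_neg (by omega), if_pos (by omega)]) k hk
  rw [this, pyr_height_le (le_refl _)]
  push_cast; ring

lemma pyr_dyck (r : ℕ) : IsDyck (pyr r) := by
  constructor
  · intro k
    rcases le_or_gt k (r+1) with hk | hk
    · rw [pyr_height_le hk]; positivity
    · rcases le_or_gt k (2*r+2) with hk2 | hk2
      · have := pyr_height_ge (r := r) (k := k - (r+1)) (by omega)
        rw [show r+1+(k-(r+1)) = k by omega] at this
        rw [this]; omega
      · rw [heightAt_of_le _ (by rw [pyr_len]; omega), pyr_len]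
        have := pyr_height_ge (r := r) (k := r+1) le_rfl
        rw [show r+1+(r+1) = 2*r+2 by ring] at this
        rw [this]; omega
  · rw [pyr_len]
    have := pyr_height_ge (r := r) (k := r+1) le_rfl
    rw [show r+1+(r+1) = 2*r+2 by ring] at this
    rw [this]; omega

lemma pyr_prime (r : ℕ) : IsPrime (pyr r) := by
  refine ⟨by simp [pyr], fun k h0 hk => ?_⟩
  rw [pyr_len] at hk
  rcases le_or_gt k (r+1) with h | h
  · rw [pyr_height_le h]; exact_mod_cast h0
  · have := pyr_height_ge (r := r) (k := k - (r+1)) (by omega)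
    rw [show r+1+(k-(r+1)) = k by omega] at this
    rw [this]; omega

lemma pyr_get_true {r k : ℕ} (h : (pyr r)[k]? = some true) : k < r+1 := by
  by_contra hc
  rw [pyr_get, if_neg hc] at h
  split_ifs at h <;> simp at h

lemma pyr_get_false {r k : ℕ} (h : (pyr r)[k]? = some false) : r+1 ≤ k ∧ k < 2*r+2 := by
  rw [pyr_get] at h
  by_cases h1 : k < r + 1
  · rw [if_pos h1] at h; simp at h
  · rw [if_neg h1] at h
    by_cases h2 : k < 2*r+2
    · omega
    · rw [if_neg h2] at h; simp at h

lemma pyr_noLow {r : ℕ} : NoLow r (pyr r) := by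
  intro m hm1 hmr
  constructor
  · rintro ⟨i, hel, hl, hr⟩
    have hi : i < r+1 := pyr_get_true (by simpa using hel 0 (by omega))
    rcases hl with rfl | hl
    · rcases hr with hr | hr
      · have := pyr_get_false hr; omega
      · rw [pyr_len] at hr; omega
    · have := pyr_get_false hl; omega
  · rintro ⟨i, hel, hl, hr⟩
    have hi := pyr_get_false (by simpa using hel 0 (by omega))
    rcases hl with rfl | hl
    · omega
    · have h1 : i = r+1 := by have := pyr_get_true hl; omega
      rcases hr with hr | hr
      · have := pyr_get_true hr
        have := pyr_get_false (by simpa using hel (m-1) (by omega))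
        omega
      · rw [pyr_len] at hr; omega

lemma pyr_len' (r : ℕ) : (pyr r).length = 2*(r+1) := by rw [pyr_len]; ring

lemma exists_wrap {p : List Bool} (hd : IsDyck p) (hne : p ≠ []) :
    ∃ q, p = wrap q := by
  have h0 := head_true hd hne
  have hL := getLast_false hd hne
  have hlen : 2 ≤ p.length := by
    have h1 : 0 < p.length := List.length_pos_iff.2 hne
    have h2 := length_eq_two_mul hd
    by_contra hc
    interval_cases h : p.length <;> omega
  have hlast : p.getLast? = some false := by
    rw [List.getLast?_eq_getElem?]; exact hL
  obtain ⟨ys, hys⟩ := List.getLast?_eq_some_iff.1 hlast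
  have hysne : ys ≠ [] := by
    rintro rfl; simp at hys; rw [hys] at hlen; simp at hlen
  obtain ⟨c, t, rfl⟩ : ∃ c t, ys = c :: t := ⟨ys.head hysne, ys.tail, (List.cons_head_tail hysne).symm⟩
  have hc : c = true := by
    rw [hys] at h0
    simpa using h0
  subst hc
  exact ⟨t, by rw [hys]; simp [wrap]⟩

/-- first return time of a nonempty Dyck path -/
noncomputable def fr {p : List Bool} (hd : IsDyck p) (hne : p ≠ []) : ℕ :=
  Nat.find (⟨p.length, List.length_pos_iff.2 hne, hd.2⟩ : ∃ k, 0 < k ∧ heightAt p k = 0)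

lemma fr_pos {p : List Bool} (hd : IsDyck p) (hne : p ≠ []) : 0 < fr hd hne :=
  (Nat.find_spec (⟨p.length, List.length_pos_iff.2 hne, hd.2⟩ : ∃ k, 0 < k ∧ heightAt p k = 0)).1

lemma fr_height {p : List Bool} (hd : IsDyck p) (hne : p ≠ []) : heightAt p (fr hd hne) = 0 :=
  (Nat.find_spec (⟨p.length, List.length_pos_iff.2 hne, hd.2⟩ : ∃ k, 0 < k ∧ heightAt p k = 0)).2

lemma fr_le {p : List Bool} (hd : IsDyck p) (hne : p ≠ []) : fr hd hne ≤ p.length :=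
  Nat.find_le ⟨List.length_pos_iff.2 hne, hd.2⟩

lemma fr_min {p : List Bool} (hd : IsDyck p) (hne : p ≠ []) {k : ℕ}
    (h0 : 0 < k) (hk : k < fr hd hne) : 0 < heightAt p k := by
  have := Nat.find_min (⟨p.length, List.length_pos_iff.2 hne, hd.2⟩ :
    ∃ k, 0 < k ∧ heightAt p k = 0) hk
  have h1 := hd.1 k
  rcases lt_or_eq_of_le h1 with h | h
  · exact h
  · exfalso; exact this ⟨h0, h.symm⟩

lemma fr_eq {u v : List Bool} (hu : IsDyck u) (hup : IsPrime u) (hv : IsDyck v)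
    (hd : IsDyck (u ++ v)) (hne : u ++ v ≠ []) : fr hd hne = u.length := by
  have hune : u ≠ [] := hup.1
  have hulen : 0 < u.length := List.length_pos_iff.2 hune
  apply le_antisymm
  · apply Nat.find_le
    refine ⟨hulen, ?_⟩
    rw [heightAt_append_left (le_refl _)]
    exact hu.2
  · by_contra hc
    push_neg at hc
    have h1 := fr_height hd hne
    have h2 := fr_pos hd hne
    have h3 : heightAt (u ++ v) (fr hd hne) = heightAt u (fr hd hne) := by
      rw [heightAt_append_left (by omega)]
    have := hup.2 (fr hd hne) h2 (by omega)
    omega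

end S13

namespace S13
open Finset in
lemma ncard_biUnion {ι α : Type*} (S : Finset ι) (f : ι → Set α)
    (hfin : ∀ i ∈ S, (f i).Finite)
    (hdisj : ∀ i ∈ S, ∀ j ∈ S, i ≠ j → Disjoint (f i) (f j)) :
    (⋃ i ∈ S, f i).ncard = ∑ i ∈ S, (f i).ncard := by
  classical
  induction S using Finset.induction_on with
  | empty => simp
  | @insert a s ha ih =>
    rw [Finset.set_biUnion_insert, Finset.sum_insert ha]
    rw [Set.ncard_union_eq ?dis ?f1 ?f2, ih (fun i hi => hfin i (by simp [hi]))
      (fun i hi j hj hne => hdisj i (by simp [hi]) j (by simp [hj]) hne)]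
    case dis =>
      rw [Set.disjoint_left]
      intro x hx hx2
      simp only [Set.mem_iUnion] at hx2
      obtain ⟨i, hi, hxi⟩ := hx2
      exact (Set.disjoint_left.1 (hdisj a (by simp) i (by simp [hi])
        (by rintro rfl; exact ha hi))) hx hxi
    case f1 => exact hfin a (by simp)
    case f2 =>
      exact Set.Finite.biUnion s.finite_toSet
        (fun i hi => hfin i (by simp only [Finset.mem_coe] at hi; simp [hi]))

lemma ncard_prod {α β : Type*} (s : Set α) (t : Set β) :
    (s ×ˢ t).ncard = s.ncard * t.ncard := by
  rw [← Nat.card_coe_set_eq, ← Nat.card_coe_set_eq, ← Nat.card_coe_set_eq,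
    Nat.card_congr (Equiv.Set.prod s t), Nat.card_prod]

variable (r : ℕ)

def Cset (n : ℕ) : Set (List Bool) := {p | p.length = 2*n ∧ IsDyck p ∧ NoLow r p}

def Bset (n : ℕ) : Set (List Bool) :=
  {p | p.length = 2*n ∧ IsDyck p ∧ IsPrime p ∧ NoLow r p}

lemma Cset_finite (n : ℕ) : (Cset r n).Finite :=
  (List.finite_length_eq Bool (2*n)).subset (fun _ hp => hp.1)

lemma Bset_finite (n : ℕ) : (Bset r n).Finite :=
  (List.finite_length_eq Bool (2*n)).subset (fun _ hp => hp.1)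

lemma noLow_nil : NoLow r [] := by
  intro m hm1 hmr
  constructor <;> rintro ⟨i, hel, -, -⟩ <;> have := hel 0 (by omega) <;> simp at this

lemma Cset_zero : Cset r 0 = {[]} := by
  ext p
  simp only [Cset, Set.mem_setOf_eq, Set.mem_singleton_iff]
  constructor
  · rintro ⟨h, -, -⟩; exact List.length_eq_zero_iff.1 (by omega)
  · rintro rfl; exact ⟨rfl, isDyck_nil, noLow_nil r⟩

lemma Bset_zero : Bset r 0 = ∅ := by
  ext p
  simp only [Bset, Set.mem_setOf_eq, Set.mem_empty_iff_false, iff_false]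
  rintro ⟨h, -, hp, -⟩
  exact hp.1 (List.length_eq_zero_iff.1 (by omega))

lemma Bset_one (hr : 1 ≤ r) : Bset r 1 = ∅ := by
  ext p
  simp only [Bset, Set.mem_setOf_eq, Set.mem_empty_iff_false, iff_false]
  rintro ⟨hlen, hd, hp, hnl⟩
  have hne : p ≠ [] := hp.1
  refine absurd ?_ (hnl 1 le_rfl hr).1
  refine ⟨0, fun j hj => ?_, Or.inl rfl, Or.inl ?_⟩
  · rw [show j = 0 by omega, Nat.add_zero]
    exact head_true hd hne
  · have := getLast_false hd hne
    rwa [hlen, show 2*1-1 = 0+1 by rfl] at this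

end S13

namespace S13

lemma fr_eq' {p u v : List Bool} (hp : p = u ++ v) (hu : IsDyck u) (hup : IsPrime u)
    (hv : IsDyck v) (hd : IsDyck p) (hne : p ≠ []) : fr hd hne = u.length := by
  subst hp; exact fr_eq hu hup hv hd hne

lemma mem_append_CB {r k l : ℕ} {u v : List Bool} (hu : u ∈ Bset r k) (hv : v ∈ Cset r l) :
    u ++ v ∈ Cset r (k + l) := by
  obtain ⟨hul, hud, hup, hunl⟩ := hu
  obtain ⟨hvl, hvd, hvnl⟩ := hv
  have hune : u ≠ [] := hup.1
  have hulast : u[u.length - 1]? = some false := getLast_false hud hune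
  have hvhead : v = [] ∨ v[0]? = some true := by
    rcases eq_or_ne v [] with h | h
    · exact Or.inl h
    · exact Or.inr (head_true hvd h)
  exact ⟨by simp [hul, hvl]; ring, isDyck_append hud hvd,
    (noLow_append hulast hvhead).2 ⟨hunl, hvnl⟩⟩

lemma lemA {r n : ℕ} (hn : 0 < n) :
    (Cset r n).ncard =
      ∑ kl ∈ Finset.HasAntidiagonal.antidiagonal n, (Bset r kl.1).ncard * (Cset r kl.2).ncard := by
  classical
  set F : ℕ × ℕ → Set (List Bool) :=
    fun kl => (fun uv : List Bool × List Bool => uv.1 ++ uv.2) ''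
      (Bset r kl.1 ×ˢ Cset r kl.2) with hF
  have hcov : Cset r n = ⋃ kl ∈ Finset.HasAntidiagonal.antidiagonal n, F kl := by
    ext p
    constructor
    · rintro ⟨hlen, hd, hnl⟩
      have hne : p ≠ [] := by
        intro h; subst h; simp at hlen; omega
      set t := fr hd hne with ht
      have htle := fr_le hd hne
      have hth := fr_height hd hne
      have ht0 := fr_pos hd hne
      set u := p.take t with hu
      set v := p.drop t with hv
      have hud : IsDyck u := isDyck_take hd hth
      have hvd : IsDyck v := isDyck_drop hd htle hth
      have hulen : u.length = t := by rw [hu, List.length_take]; omega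
      have hupr : IsPrime u := by
        refine ⟨fun h => ?_, fun k hk0 hkl => ?_⟩
        · have := congrArg List.length h; rw [hulen] at this; simp at this; omega
        · rw [hulen] at hkl
          rw [hu, heightAt_take, min_eq_left (le_of_lt hkl)]
          exact fr_min hd hne hk0 hkl
      have hsplit : p = u ++ v := (List.take_append_drop t p).symm
      have hulast : u[u.length-1]? = some false := getLast_false hud hupr.1
      have hvhead : v = [] ∨ v[0]? = some true := by
        rcases eq_or_ne v [] with h | h
        · exact Or.inl h
        · exact Or.inr (head_true hvd h)
      have hnl2 := (noLow_append hulast hvhead).1 (hsplit ▸ hnl)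
      set k := u.count true with hk
      set l := v.count true with hl
      have hul2 : u.length = 2*k := length_eq_two_mul hud
      have hvl2 : v.length = 2*l := length_eq_two_mul hvd
      have hkl : k + l = n := by
        have := congrArg List.length hsplit
        simp only [List.length_append] at this
        omega
      simp only [Set.mem_iUnion]
      exact ⟨(k, l), Finset.HasAntidiagonal.mem_antidiagonal.2 hkl,
        (u, v), ⟨⟨hul2, hud, hupr, hnl2.1⟩, hvl2, hvd, hnl2.2⟩, hsplit.symm⟩
    · intro hp
      simp only [Set.mem_iUnion] at hp
      obtain ⟨⟨k, l⟩, hkl, ⟨u, v⟩, ⟨hu2, hv2⟩, rfl⟩ := hp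
      have := mem_append_CB hu2 hv2
      rwa [Finset.HasAntidiagonal.mem_antidiagonal.1 hkl] at this
  have hfin : ∀ kl ∈ Finset.HasAntidiagonal.antidiagonal n, (F kl).Finite :=
    fun kl _ => (((Bset_finite r kl.1).prod (Cset_finite r kl.2)).image _)
  have hdisj : ∀ kl ∈ Finset.HasAntidiagonal.antidiagonal n, ∀ kl' ∈ Finset.HasAntidiagonal.antidiagonal n,
      kl ≠ kl' → Disjoint (F kl) (F kl') := by
    intro kl hkl kl' hkl' hne
    rw [Set.disjoint_left]
    rintro p ⟨⟨u, v⟩, ⟨hu2, hv2⟩, rfl⟩ ⟨⟨u', v'⟩, ⟨hu2', hv2'⟩, heq⟩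
    have hd : IsDyck (u ++ v) := isDyck_append hu2.2.1 hv2.2.1
    have hne2 : u ++ v ≠ [] := by
      intro h
      exact hu2.2.2.1.1 (List.append_eq_nil_iff.1 h).1
    have h1 : fr hd hne2 = u.length := fr_eq' rfl hu2.2.1 hu2.2.2.1 hv2.2.1 hd hne2
    have h2 : fr hd hne2 = u'.length :=
      fr_eq' heq.symm hu2'.2.1 hu2'.2.2.1 hv2'.2.1 hd hne2
    apply hne
    have e1 : kl.1 = kl'.1 := by
      have hA : u.length = 2*kl.1 := hu2.1
      have hB : u'.length = 2*kl'.1 := hu2'.1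
      omega
    have e2 : kl.2 = kl'.2 := by
      have := Finset.HasAntidiagonal.mem_antidiagonal.1 hkl
      have := Finset.HasAntidiagonal.mem_antidiagonal.1 hkl'
      omega
    exact Prod.ext e1 e2
  rw [hcov, ncard_biUnion _ _ hfin hdisj]
  refine Finset.sum_congr rfl (fun kl hkl => ?_)
  rw [hF]
  have hinj : Set.InjOn (fun uv : List Bool × List Bool => uv.1 ++ uv.2)
      (Bset r kl.1 ×ˢ Cset r kl.2) := by
    rintro ⟨u, v⟩ ⟨hu2, hv2⟩ ⟨u', v'⟩ ⟨hu2', hv2'⟩ heq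
    simp only at heq
    have hlen : u.length = u'.length := by
      have hA : u.length = 2*kl.1 := hu2.1
      have hB : u'.length = 2*kl.1 := hu2'.1
      omega
    obtain ⟨e1, e2⟩ := List.append_inj heq hlen
    simp [e1, e2]
  rw [Set.ncard_image_of_injOn hinj, ncard_prod]

lemma wrap_injective : Function.Injective wrap := by
  intro a b h
  simpa [wrap, List.append_left_inj] using h

lemma lemB {r n : ℕ} (hr : 1 ≤ r) (hn : 2 ≤ n) :
    (Bset r n).ncard = (Cset r (n-1)).ncard + (if n = r+1 then 1 else 0) := by
  have hset : Bset r n = wrap '' Cset r (n-1) ∪ (if n = r+1 then {pyr r} else ∅) := by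
    ext p
    simp only [Set.mem_union, Set.mem_image]
    constructor
    · rintro ⟨hlen, hd, hp, hnl⟩
      have hne : p ≠ [] := hp.1
      obtain ⟨q, rfl⟩ := exists_wrap hd hne
      have hwl := wrap_len q
      have hqlen : q.length = 2*(n-1) := by omega
      have hqne : q ≠ [] := by
        intro h; subst h; simp at hqlen; omega
      by_cases hpyr : wrap q = pyr r
      · right
        have hnr : n = r + 1 := by
          have := congrArg List.length hpyr
          rw [wrap_len, pyr_len] at this
          omega
        rw [if_pos hnr]
        exact hpyr
      · left
        exact ⟨q, ⟨hqlen, unwrap_dyck hd hp, unwrap_noLow hr hd hp hnl hpyr hqne⟩, rfl⟩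
    · rintro (⟨q, ⟨hqlen, hqd, hqnl⟩, rfl⟩ | hpyr)
      · have hqne : q ≠ [] := by
          intro h; subst h; simp at hqlen; omega
        refine ⟨by rw [wrap_len]; omega, wrap_dyck hqd, wrap_prime hqd, ?_⟩
        exact noLow_wrap (head_true hqd hqne) (getLast_false hqd hqne) hqnl
      · split_ifs at hpyr with hnr
        · rw [Set.mem_singleton_iff] at hpyr
          subst hpyr; subst hnr
          exact ⟨by rw [pyr_len]; ring, pyr_dyck r, pyr_prime r, pyr_noLow⟩
        · simp at hpyr
  have hpyr_not_mem : pyr r ∉ wrap '' Cset r (n-1) := by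
    rintro ⟨q, ⟨hqlen, hqd, hqnl⟩, heq⟩
    have hql : q.length = 2*r := by
      have := congrArg List.length heq
      rw [wrap_len, pyr_len] at this
      omega
    refine absurd ?_ (hqnl r hr le_rfl).1
    refine ⟨0, fun j hj => ?_, Or.inl rfl, Or.inl ?_⟩
    · have h1 : (wrap q)[j+1]? = q[j]? := wrap_get_mid (by omega)
      rw [heq, pyr_get, if_pos (by omega)] at h1
      simpa using h1.symm
    · have h1 : (wrap q)[r+1]? = q[r]? := wrap_get_mid (by omega)
      rw [heq, pyr_get, if_neg (by omega), if_pos (by omega)] at h1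
      simpa using h1.symm
  rw [hset]
  rcases eq_or_ne n (r+1) with rfl | hne
  · rw [if_pos rfl, if_pos rfl,
      Set.ncard_union_eq (by simpa using hpyr_not_mem)
        ((Cset_finite r _).image _) (Set.finite_singleton _),
      Set.ncard_image_of_injOn (wrap_injective.injOn), Set.ncard_singleton]
  · rw [if_neg hne, if_neg hne, Set.union_empty,
      Set.ncard_image_of_injOn (wrap_injective.injOn)]
    simp

end S13

namespace S13

noncomputable def aseq (r n : ℕ) : ℕ := (Cset r n).ncard
noncomputable def bseq (r n : ℕ) : ℕ := (Bset r n).ncard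

lemma aseq_zero (r : ℕ) : aseq r 0 = 1 := by
  rw [aseq, Cset_zero]; exact Set.ncard_singleton _

lemma bseq_zero (r : ℕ) : bseq r 0 = 0 := by
  rw [bseq, Bset_zero]; exact Set.ncard_empty _

lemma bseq_one {r : ℕ} (hr : 1 ≤ r) : bseq r 1 = 0 := by
  rw [bseq, Bset_one r hr]; exact Set.ncard_empty _

open PowerSeries in
lemma eqA (r : ℕ) :
    (mk (aseq r) : PowerSeries ℕ) = 1 + mk (bseq r) * mk (aseq r) := by
  ext n
  rw [map_add, coeff_mk, coeff_mul]
  cases n with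
  | zero =>
    rw [Finset.Nat.antidiagonal_zero]
    simp [coeff_mk, bseq_zero, aseq_zero]
  | succ n =>
    rw [coeff_one, if_neg (by omega)]
    rw [aseq, lemA (by omega : 0 < n+1)]
    simp only [coeff_mk, aseq, bseq, Nat.zero_add, zero_add]

open PowerSeries in
lemma eqB {r : ℕ} (hr : 1 ≤ r) :
    (mk (bseq r) : PowerSeries ℕ) + X = X^(r+1) + X * mk (aseq r) := by
  ext n
  rw [map_add, map_add, coeff_mk, coeff_X, coeff_X_pow]
  match n with
  | 0 =>
    rw [coeff_zero_X_mul]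
    simp [bseq_zero, if_neg (by omega : ¬ (0:ℕ) = r+1)]
  | 1 =>
    rw [coeff_succ_X_mul, coeff_mk]
    rw [if_pos rfl, if_neg (by omega), bseq_one hr, aseq_zero]
  | (n+2) =>
    rw [coeff_succ_X_mul, coeff_mk]
    rw [if_neg (by omega)]
    rw [bseq, lemB hr (by omega : 2 ≤ n+2)]
    simp only [show n + 2 - 1 = n + 1 by omega, aseq, add_zero]
    rw [add_comm]

open PowerSeries in
lemma main {r : ℕ} (hr : 1 ≤ r) :
    (mk (aseq r) : PowerSeries ℕ) + X * mk (aseq r) =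
      1 + X^(r+1) * mk (aseq r) + X * (mk (aseq r))^2 := by
  set A := (mk (aseq r) : PowerSeries ℕ)
  set B := (mk (bseq r) : PowerSeries ℕ)
  have hA : A = 1 + B * A := eqA r
  have hB : B + X = X^(r+1) + X * A := eqB hr
  calc A + X * A = (1 + B * A) + X * A := by rw [← hA]
    _ = 1 + (B + X) * A := by ring
    _ = 1 + (X^(r+1) + X * A) * A := by rw [hB]
    _ = 1 + X^(r+1) * A + X * A^2 := by ring

end S13


/-- For `r ≥ 1` and `P` the generating function of Dyck paths with no up-run and no
down-run of a length in `{1, …, r}`: `P + zP = 1 + z^(r+1) P + z P²`. -/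
theorem stmt13 (r : ℕ) (hr : 1 ≤ r) :
    let P := genFun (fun p => ∀ m : ℕ, 1 ≤ m → m ≤ r → ¬ HasUpRun p m ∧ ¬ HasDownRun p m)
    P + PowerSeries.X * P =
      1 + PowerSeries.X ^ (r + 1) * P + PowerSeries.X * P ^ 2 := by
  intro P
  have h : P = PowerSeries.mk (S13.aseq r) := rfl
  rw [h]
  exact S13.main hr
end

section
/- Let r and k be positive integers with k ≤ r, and let P be the generating function of the set of Dyck paths none of whose up-run lengths lies in {1, …, r} and none of whose down-run lengths lies in {k+1, …, r}. Then, as formal power series, P + z·P + z^{r+1}·P^{r+1−k} = 1 + z·P^2 + z^{r+1}·P + z^{r+1}·P^{r+1}. -/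
namespace S16

/-- composite path -/
def comp (u d : ℕ) (t : List Bool) : List Bool :=
  List.replicate u true ++ (List.replicate d false ++ t)

lemma comp_length (u d : ℕ) (t : List Bool) : (comp u d t).length = u + d + t.length := by
  simp [comp]; omega

lemma comp_count_true (u d : ℕ) (t : List Bool) :
    (comp u d t).count true = u + t.count true := by
  simp [comp, List.count_append, List.count_replicate]

lemma comp_count_false (u d : ℕ) (t : List Bool) :
    (comp u d t).count false = d + t.count false := by
  simp [comp, List.count_append, List.count_replicate]

lemma heightAt_stable (p : List Bool) {i : ℕ} (h : p.length ≤ i) :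
    heightAt p i = heightAt p p.length := by
  unfold heightAt
  rw [List.take_of_length_le h, List.take_of_length_le le_rfl]

lemma heightAt_append_left {xs ys : List Bool} {i : ℕ} (h : i ≤ xs.length) :
    heightAt (xs ++ ys) i = heightAt xs i := by
  unfold heightAt
  rw [List.take_append, Nat.sub_eq_zero_of_le h]
  simp

lemma heightAt_append_right (xs ys : List Bool) (i : ℕ) :
    heightAt (xs ++ ys) (xs.length + i) = heightAt xs xs.length + heightAt ys i := by
  unfold heightAt
  rw [List.take_append, List.take_of_length_le (by omega), Nat.add_sub_cancel_left]
  simp [List.count_append]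
  ring

lemma heightAt_replicate_true (u i : ℕ) :
    heightAt (List.replicate u true) i = ((min i u : ℕ) : ℤ) := by
  unfold heightAt
  rw [List.take_replicate]
  simp [List.count_replicate]

lemma heightAt_replicate_false (d i : ℕ) :
    heightAt (List.replicate d false) i = -((min i d : ℕ) : ℤ) := by
  unfold heightAt
  rw [List.take_replicate]
  simp [List.count_replicate]

lemma comp_height₁ (u d : ℕ) (t : List Bool) {i : ℕ} (h : i ≤ u) :
    heightAt (comp u d t) i = i := by
  rw [comp, heightAt_append_left (by simpa using h), heightAt_replicate_true]
  simp [Nat.min_eq_left h]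

lemma comp_height₂ (u d : ℕ) (t : List Bool) {j : ℕ} (h : j ≤ d) :
    heightAt (comp u d t) (u + j) = (u : ℤ) - j := by
  have := heightAt_append_right (List.replicate u true) (List.replicate d false ++ t) j
  simp only [List.length_replicate] at this
  rw [comp, this, heightAt_append_left (by simpa using h), heightAt_replicate_true,
    heightAt_replicate_false]
  simp [Nat.min_eq_left h]; ring

lemma comp_height₃ (u d : ℕ) (t : List Bool) (i : ℕ) :
    heightAt (comp u d t) (u + d + i) = (u : ℤ) - d + heightAt t i := by
  have h1 := heightAt_append_right (List.replicate u true) (List.replicate d false ++ t) (d + i)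
  have h2 := heightAt_append_right (List.replicate d false) t i
  simp only [List.length_replicate] at h1 h2
  rw [comp, show u + d + i = u + (d + i) by omega, h1, h2, heightAt_replicate_true,
    heightAt_replicate_false]
  simp; ring

lemma comp_getElem₁ (u d : ℕ) (t : List Bool) {i : ℕ} (h : i < u) :
    (comp u d t)[i]? = some true := by
  rw [comp, List.getElem?_append]
  simp [h]

lemma comp_getElem₂ (u d : ℕ) (t : List Bool) {i : ℕ} (h1 : u ≤ i) (h2 : i < u + d) :
    (comp u d t)[i]? = some false := by
  rw [comp, List.getElem?_append_right (by simpa using h1), List.getElem?_append]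
  simp only [List.length_replicate, List.getElem?_replicate]
  rw [if_pos (by omega), if_pos (by omega)]

lemma comp_getElem₃ (u d : ℕ) (t : List Bool) {i : ℕ} (h : u + d ≤ i) :
    (comp u d t)[i]? = t[i - (u + d)]? := by
  rw [comp, List.getElem?_append_right (by simp; omega)]
  rw [List.getElem?_append_right (by simp; omega)]
  simp; congr 1; omega

end S16

namespace S16

variable {u d : ℕ} {t : List Bool}

/-- starting condition: first element not a down-step -/
def StartOK (t : List Bool) : Prop := t[0]? ≠ some false

lemma startOK_iff : StartOK t ↔ (t = [] ∨ t[0]? = some true) := by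
  rcases t with _ | ⟨b, t⟩
  · simp [StartOK]
  · cases b <;> simp [StartOK]

lemma upRun_comp (hu : 1 ≤ u) (hd : 1 ≤ d) : HasUpRun (comp u d t) u := by
  refine ⟨0, fun j hj => ?_, Or.inl rfl, Or.inl ?_⟩
  · simpa using comp_getElem₁ u d t hj
  · simpa using comp_getElem₂ u d t le_rfl (by omega)

lemma downRun_comp (hu : 1 ≤ u) (hok : StartOK t) : HasDownRun (comp u d t) d := by
  refine ⟨u, fun j hj => comp_getElem₂ u d t (by omega) (by omega), Or.inr ?_, ?_⟩
  · exact comp_getElem₁ u d t (by omega)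
  · rcases (startOK_iff.1 hok) with h | h
    · right; subst h; simp [comp_length]
    · left; rw [comp_getElem₃ u d t le_rfl]; simpa using h

lemma hasUpRun_comp_of (hd : 1 ≤ d) {j : ℕ} (hj : HasUpRun t j) :
    HasUpRun (comp u d t) j := by
  obtain ⟨i, hT, hL, hR⟩ := hj
  refine ⟨u + d + i, fun j' hj' => ?_, ?_, ?_⟩
  · rw [comp_getElem₃ u d t (by omega), show u + d + i + j' - (u + d) = i + j' by omega]
    exact hT j' hj'
  · right
    rcases hL with h0 | hprev
    · subst h0
      rw [show u + d + 0 - 1 = u + (d - 1) by omega]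
      exact comp_getElem₂ u d t (by omega) (by omega)
    · by_cases hi0 : i = 0
      · subst hi0
        rw [show u + d + 0 - 1 = u + (d - 1) by omega]
        exact comp_getElem₂ u d t (by omega) (by omega)
      · rw [comp_getElem₃ u d t (by omega), show u + d + i - 1 - (u + d) = i - 1 by omega]
        exact hprev
  · rcases hR with h | h
    · left
      rw [show u + d + i + j = u + d + (i + j) by omega,
        comp_getElem₃ u d t (by omega), show u + d + (i + j) - (u + d) = i + j by omega]
      exact h
    · right; rw [comp_length]; omega

lemma hasDownRun_comp_of (hok : StartOK t) {j : ℕ} (hjpos : 1 ≤ j) (hj : HasDownRun t j) :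
    HasDownRun (comp u d t) j := by
  obtain ⟨i, hT, hL, hR⟩ := hj
  have hi0 : i ≠ 0 := by
    intro h; subst h
    exact hok (hT 0 hjpos)
  refine ⟨u + d + i, fun j' hj' => ?_, ?_, ?_⟩
  · rw [comp_getElem₃ u d t (by omega), show u + d + i + j' - (u + d) = i + j' by omega]
    exact hT j' hj'
  · right
    rcases hL with h0 | hprev
    · exact absurd h0 hi0
    · rw [comp_getElem₃ u d t (by omega), show u + d + i - 1 - (u + d) = i - 1 by omega]
      exact hprev
  · rcases hR with h | h
    · left
      rw [show u + d + i + j = u + d + (i + j) by omega,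
        comp_getElem₃ u d t (by omega), show u + d + (i + j) - (u + d) = i + j by omega]
      exact h
    · right; rw [comp_length]; omega

lemma hasUpRun_comp_elim (hu : 1 ≤ u) (hd : 1 ≤ d) {j : ℕ} (hjpos : 1 ≤ j)
    (hj : HasUpRun (comp u d t) j) : j = u ∨ HasUpRun t j := by
  obtain ⟨i, hT, hL, hR⟩ := hj
  have hlen := comp_length u d t
  have hi : (comp u d t)[i]? = some true := hT 0 hjpos
  by_cases hiu : i < u
  · -- must be the initial run
    have hi0 : i = 0 := by
      rcases hL with h | h
      · exact h
      · exfalso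
        rw [comp_getElem₁ u d t (by omega)] at h
        simp at h
    subst hi0
    left
    have hju : ¬ u < j := by
      intro hlt
      have := hT u hlt
      rw [zero_add, comp_getElem₂ u d t le_rfl (by omega)] at this
      simp at this
    have hju2 : ¬ j < u := by
      intro hlt
      rcases hR with h | h
      · rw [zero_add] at h
        rw [comp_getElem₁ u d t (by simpa using hlt)] at h
        simp at h
      · simp at h; omega
    omega
  · by_cases hiud : i < u + d
    · exfalso
      rw [comp_getElem₂ u d t (by omega) hiud] at hi
      simp at hi
    · right
      refine ⟨i - (u + d), fun j' hj' => ?_, ?_, ?_⟩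
      · have := hT j' hj'
        rw [comp_getElem₃ u d t (by omega), show i + j' - (u + d) = i - (u + d) + j' by omega] at this
        exact this
      · by_cases h0 : i = u + d
        · left; omega
        · right
          rcases hL with h | h
          · omega
          · rw [comp_getElem₃ u d t (by omega), show i - 1 - (u + d) = i - (u + d) - 1 by omega] at h
            exact h
      · rcases hR with h | h
        · left
          rw [comp_getElem₃ u d t (by omega), show i + j - (u + d) = i - (u + d) + j by omega] at h
          exact h
        · right; omega

lemma hasDownRun_comp_elim (hu : 1 ≤ u) (hd : 1 ≤ d) (hok : StartOK t) {j : ℕ} (hjpos : 1 ≤ j)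
    (hj : HasDownRun (comp u d t) j) : j = d ∨ HasDownRun t j := by
  obtain ⟨i, hT, hL, hR⟩ := hj
  have hlen := comp_length u d t
  have hi : (comp u d t)[i]? = some false := hT 0 hjpos
  by_cases hiu : i < u
  · exfalso
    rw [comp_getElem₁ u d t hiu] at hi
    simp at hi
  · by_cases hiud : i < u + d
    · -- the middle run
      left
      have hieq : i = u := by
        by_contra hne
        rcases hL with h | h
        · omega
        · rw [comp_getElem₂ u d t (by omega) (by omega)] at h
          simp at h
      rw [hieq] at hT hR
      have h1 : ¬ d < j := by
        intro hlt
        have := hT d hlt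
        rcases (startOK_iff.1 hok) with ht | ht
        · subst ht
          rw [comp_getElem₃ u d [] le_rfl] at this
          simp at this
        · rw [comp_getElem₃ u d t le_rfl, Nat.sub_self] at this
          rw [ht] at this
          simp at this
      have h2 : ¬ j < d := by
        intro hlt
        rcases hR with h | h
        · rw [comp_getElem₂ u d t (by omega) (by omega)] at h
          simp at h
        · omega
      omega
    · right
      have hi0 : u + d < i := by
        rcases Nat.lt_or_ge (u+d) i with h | h
        · exact h
        · exfalso
          have : i = u + d := by omega
          subst this
          rw [comp_getElem₃ u d t le_rfl, Nat.sub_self] at hi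
          exact hok hi
      refine ⟨i - (u + d), fun j' hj' => ?_, ?_, ?_⟩
      · have := hT j' hj'
        rw [comp_getElem₃ u d t (by omega), show i + j' - (u + d) = i - (u + d) + j' by omega] at this
        exact this
      · right
        rcases hL with h | h
        · omega
        · rw [comp_getElem₃ u d t (by omega), show i - 1 - (u + d) = i - (u + d) - 1 by omega] at h
          exact h
      · rcases hR with h | h
        · left
          rw [comp_getElem₃ u d t (by omega), show i + j - (u + d) = i - (u + d) + j by omega] at h
          exact h
        · right; omega

end S16

namespace S16

/-- allowed down-run lengths -/
def Bset (r k d : ℕ) : Prop := (1 ≤ d ∧ d ≤ k) ∨ r + 1 ≤ d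

instance (r k : ℕ) : DecidablePred (Bset r k) := fun d => by
  unfold Bset; infer_instance

def Valid (r k : ℕ) (p : List Bool) : Prop :=
  (∀ j : ℕ, 1 ≤ j → j ≤ r → ¬ HasUpRun p j) ∧
    (∀ j : ℕ, k + 1 ≤ j → j ≤ r → ¬ HasDownRun p j)

def CSet (r k h n : ℕ) : Set (List Bool) :=
  {p | (∀ i, 0 ≤ (h : ℤ) + heightAt p i) ∧ (h : ℤ) + heightAt p p.length = 0 ∧
    Valid r k p ∧ StartOK p ∧ p.count true = n}

noncomputable def c (r k h n : ℕ) : ℕ := (CSet r k h n).ncard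

lemma length_eq_counts (p : List Bool) : p.length = p.count true + p.count false := by
  induction p with
  | nil => simp
  | cons x q ih =>
    rw [List.length_cons, ih, List.count_cons, List.count_cons]
    cases x <;> simp <;> omega

lemma count_false_of_mem {r k h n : ℕ} {p : List Bool} (hp : p ∈ CSet r k h n) :
    p.count false = h + n := by
  obtain ⟨-, hend, -, -, hcount⟩ := hp
  unfold heightAt at hend
  rw [List.take_length] at hend
  omega

variable {r k : ℕ} (hk : 1 ≤ k) (hkr : k ≤ r)

lemma comp_mem {u d h n : ℕ} (hu : r + 1 ≤ u) (hun : u ≤ n) (hd1 : 1 ≤ d)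
    (hdh : d ≤ h + u) (hB : Bset r k d) {t : List Bool}
    (ht : t ∈ CSet r k (h + u - d) (n - u)) : comp u d t ∈ CSet r k h n := by
  obtain ⟨hth, htend, htval, htok, htcount⟩ := ht
  have hu1 : 1 ≤ u := by omega
  have hcast : ((h + u - d : ℕ) : ℤ) = (h : ℤ) + u - d := by omega
  refine ⟨?_, ?_, ⟨?_, ?_⟩, ?_, ?_⟩
  · intro i
    rcases le_or_gt i u with h1 | h1
    · rw [comp_height₁ u d t h1]; omega
    · rcases le_or_gt i (u + d) with h2 | h2
      · rw [show i = u + (i - u) by omega, comp_height₂ u d t (by omega : i - u ≤ d)]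
        omega
      · rw [show i = u + d + (i - u - d) by omega, comp_height₃]
        have := hth (i - u - d)
        omega
  · rw [comp_length, show u + d + t.length = u + d + t.length from rfl, comp_height₃]
    rw [hcast] at htend
    omega
  · intro j hj1 hjr hrun
    rcases hasUpRun_comp_elim hu1 hd1 hj1 hrun with h | h
    · omega
    · exact htval.1 j hj1 hjr h
  · intro j hj1 hjr hrun
    rcases hasDownRun_comp_elim hu1 hd1 htok (by omega) hrun with h | h
    · subst h
      rcases hB with ⟨-, h2⟩ | h2 <;> omega
    · exact htval.2 j hj1 hjr h
  · intro hbad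
    rw [show (0:ℕ) = 0 from rfl] at hbad
    have : (comp u d t)[0]? = some true := comp_getElem₁ u d t (by omega)
    rw [this] at hbad
    simp at hbad
  · rw [comp_count_true, htcount]; omega

lemma exists_lead (b : Bool) : ∀ {p : List Bool}, p[0]? = some b →
    ∃ u rest, 1 ≤ u ∧ p = List.replicate u b ++ rest ∧ rest[0]? ≠ some b := by
  intro p
  induction p with
  | nil => intro h; simp at h
  | cons x q ih =>
    intro hp
    have hx : b = x := by simpa using hp.symm
    subst hx
    by_cases hq : q[0]? = some b
    · obtain ⟨u, rest, hu1, hu2, hu3⟩ := ih hq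
      refine ⟨u + 1, rest, by omega, ?_, hu3⟩
      rw [List.replicate_succ, List.cons_append, ← hu2]
    · exact ⟨1, q, le_rfl, by simp, hq⟩

lemma decompose {h n : ℕ} (hn : 1 ≤ n) {p : List Bool} (hp : p ∈ CSet r k h n) :
    ∃ u d t, r + 1 ≤ u ∧ u ≤ n ∧ 1 ≤ d ∧ d ≤ h + u ∧ Bset r k d ∧
      t ∈ CSet r k (h + u - d) (n - u) ∧ p = comp u d t := by
  obtain ⟨hph, hpend, hpval, hpok, hpcount⟩ := hp
  have hpne : p ≠ [] := by
    intro h; subst h; simp at hpcount; omega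
  have hp0 : p[0]? = some true := by
    rcases startOK_iff.1 hpok with h | h
    · exact absurd h hpne
    · exact h
  obtain ⟨u, rest, hu1, hps, hrest⟩ := exists_lead true hp0
  have hrestne : rest ≠ [] := by
    intro h
    subst h
    rw [List.append_nil] at hps
    subst hps
    unfold heightAt at hpend
    rw [List.take_length] at hpend
    simp [List.count_replicate] at hpend
    omega
  have hrest0 : rest[0]? = some false := by
    rcases rest with _ | ⟨b, rest'⟩
    · exact absurd rfl hrestne
    · cases b
      · simp
      · simp at hrest
  obtain ⟨d, t, hd1, hrs, htok⟩ := exists_lead false hrest0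
  have hpc : p = comp u d t := by rw [hps, hrs, comp]
  subst hpc
  have htok' : StartOK t := htok
  have hcountc := comp_count_true u d t
  rw [hcountc] at hpcount
  have hun : u ≤ n := by omega
  have hBu : r + 1 ≤ u := by
    by_contra hlt
    exact hpval.1 u hu1 (by omega) (upRun_comp hu1 hd1)
  have hdh : d ≤ h + u := by
    have := hph (u + d)
    rw [show u + d = u + d from rfl, comp_height₂ u d t le_rfl] at this
    omega
  have hBd : Bset r k d := by
    by_cases hsm : d ≤ k
    · exact Or.inl ⟨hd1, hsm⟩
    · right
      by_contra hlt
      exact hpval.2 d (by omega) (by omega) (downRun_comp hu1 htok')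
  have hcast : ((h + u - d : ℕ) : ℤ) = (h : ℤ) + u - d := by omega
  refine ⟨u, d, t, hBu, hun, hd1, hdh, hBd, ⟨?_, ?_, ⟨?_, ?_⟩, htok', by omega⟩, rfl⟩
  · intro i
    have := hph (u + d + i)
    rw [comp_height₃] at this
    omega
  · have := hpend
    rw [comp_length, comp_height₃] at this
    omega
  · intro j hj1 hjr hrun
    exact hpval.1 j hj1 hjr (hasUpRun_comp_of hd1 hrun)
  · intro j hj1 hjr hrun
    exact hpval.2 j hj1 hjr (hasDownRun_comp_of htok' (by omega) hrun)

lemma comp_inj {u d u' d' : ℕ} {t t' : List Bool} (hu : 1 ≤ u) (hu' : 1 ≤ u')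
    (hd : 1 ≤ d) (hd' : 1 ≤ d') (ht : StartOK t) (ht' : StartOK t')
    (heq : comp u d t = comp u' d' t') : u = u' ∧ d = d' ∧ t = t' := by
  have huu : u = u' := by
    by_contra hne
    rcases Nat.lt_or_ge u u' with hlt | hge
    · have h1 : (comp u d t)[u]? = some false := comp_getElem₂ u d t le_rfl (by omega)
      have h2 : (comp u' d' t')[u]? = some true := comp_getElem₁ u' d' t' hlt
      rw [heq, h2] at h1; simp at h1
    · have hlt : u' < u := by omega
      have h1 : (comp u' d' t')[u']? = some false := comp_getElem₂ u' d' t' le_rfl (by omega)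
      have h2 : (comp u d t)[u']? = some true := comp_getElem₁ u d t hlt
      rw [← heq, h2] at h1; simp at h1
  subst huu
  have hdd : d = d' := by
    by_contra hne
    rcases Nat.lt_or_ge d d' with hlt | hge
    · have h1 : (comp u d' t')[u + d]? = some false := comp_getElem₂ u d' t' (by omega) (by omega)
      have h2 : (comp u d t)[u + d]? = t[0]? := by
        rw [comp_getElem₃ u d t le_rfl, Nat.sub_self]
      rw [heq, h1] at h2
      exact ht h2.symm
    · have hlt : d' < d := by omega
      have h1 : (comp u d t)[u + d']? = some false := comp_getElem₂ u d t (by omega) (by omega)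
      have h2 : (comp u d' t')[u + d']? = t'[0]? := by
        rw [comp_getElem₃ u d' t' le_rfl, Nat.sub_self]
      rw [← heq, h1] at h2
      exact ht' h2.symm
  subst hdd
  refine ⟨rfl, rfl, ?_⟩
  unfold comp at heq
  exact List.append_cancel_left (List.append_cancel_left heq)

end S16

namespace S16

lemma cset_finite (r k h n : ℕ) : (CSet r k h n).Finite := by
  apply (List.finite_length_eq Bool (2 * n + h)).subset
  intro p hp
  have h1 : p.count true = n := hp.2.2.2.2
  have h2 := count_false_of_mem hp
  have h3 := length_eq_counts p
  simp only [Set.mem_setOf_eq]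
  omega

lemma ncard_biUnion {α : Type*} {ι : Type*} [DecidableEq ι] (I : Finset ι) (f : ι → Set α)
    (hfin : ∀ i ∈ I, (f i).Finite)
    (hdisj : ∀ i ∈ I, ∀ j ∈ I, i ≠ j → Disjoint (f i) (f j)) :
    (⋃ i ∈ I, f i).ncard = ∑ i ∈ I, (f i).ncard := by
  induction I using Finset.induction_on with
  | empty => simp
  | @insert a s ha ih =>
    rw [Finset.sum_insert ha, Finset.set_biUnion_insert]
    rw [Set.ncard_union_eq ?disj ?f1 ?f2]
    case disj =>
      simp only [Set.disjoint_iUnion_right]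
      intro i hi
      exact hdisj a (Finset.mem_insert_self a s) i (Finset.mem_insert_of_mem hi)
        (by rintro rfl; exact ha hi)
    case f1 => exact hfin a (Finset.mem_insert_self a s)
    case f2 =>
      exact Set.Finite.biUnion s.finite_toSet
        (fun i hi => hfin i (Finset.mem_insert_of_mem hi))
    rw [ih (fun i hi => hfin i (Finset.mem_insert_of_mem hi))
      (fun i hi j hj hij => hdisj i (Finset.mem_insert_of_mem hi) j
        (Finset.mem_insert_of_mem hj) hij)]

variable {r k : ℕ}

/-- the pieces of the decomposition -/
def piece (r k h n : ℕ) (ud : ℕ × ℕ) : Set (List Bool) :=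
  if ud.2 ≤ h + ud.1 ∧ Bset r k ud.2 then
    (fun t => comp ud.1 ud.2 t) '' CSet r k (h + ud.1 - ud.2) (n - ud.1)
  else ∅

lemma piece_finite (h n : ℕ) (ud : ℕ × ℕ) : (piece r k h n ud).Finite := by
  unfold piece
  split
  · exact (cset_finite r k _ _).image _
  · exact Set.finite_empty

lemma mem_piece_startOK {h n : ℕ} {ud : ℕ × ℕ} {p : List Bool}
    (hud1 : 1 ≤ ud.1) (hud2 : 1 ≤ ud.2)
    (hp : p ∈ piece r k h n ud) :
    ∃ t, StartOK t ∧ p = comp ud.1 ud.2 t := by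
  unfold piece at hp
  split at hp
  · obtain ⟨t, ht, rfl⟩ := hp
    exact ⟨t, ht.2.2.2.1, rfl⟩
  · exact absurd hp (Set.notMem_empty p)

lemma piece_disjoint (h n : ℕ) {ud ud' : ℕ × ℕ}
    (h1 : 1 ≤ ud.1) (h2 : 1 ≤ ud.2) (h1' : 1 ≤ ud'.1) (h2' : 1 ≤ ud'.2)
    (hne : ud ≠ ud') : Disjoint (piece r k h n ud) (piece r k h n ud') := by
  rw [Set.disjoint_left]
  intro p hp hp'
  obtain ⟨t, ht, rfl⟩ := mem_piece_startOK h1 h2 hp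
  obtain ⟨t', ht', heq⟩ := mem_piece_startOK h1' h2' hp'
  obtain ⟨e1, e2, -⟩ := comp_inj h1 h1' h2 h2' ht ht' heq
  exact hne (Prod.ext e1 e2)

lemma cset_eq_biUnion (hk : 1 ≤ k) (hkr : k ≤ r) (h n : ℕ) (hn : 1 ≤ n) :
    CSet r k h n =
      ⋃ ud ∈ (Finset.Icc (r+1) n) ×ˢ (Finset.Icc 1 (h+n)), piece r k h n ud := by
  ext p
  constructor
  · intro hp
    obtain ⟨u, d, t, hu, hun, hd1, hdh, hB, ht, rfl⟩ := decompose hn hp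
    have hmem : (u, d) ∈ (Finset.Icc (r+1) n) ×ˢ (Finset.Icc 1 (h+n)) := by
      simp only [Finset.mem_product, Finset.mem_Icc]
      exact ⟨⟨hu, hun⟩, hd1, by omega⟩
    apply Set.mem_biUnion hmem
    unfold piece
    rw [if_pos ⟨hdh, hB⟩]
    exact ⟨t, ht, rfl⟩
  · intro hp
    simp only [Set.mem_iUnion] at hp
    obtain ⟨⟨u, d⟩, hud, hp⟩ := hp
    simp only [Finset.mem_product, Finset.mem_Icc] at hud
    unfold piece at hp
    split_ifs at hp with hcond
    · obtain ⟨t, ht, rfl⟩ := hp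
      exact comp_mem hud.1.1 hud.1.2 hud.2.1 hcond.1 hcond.2 ht
    · exact absurd hp (Set.notMem_empty p)

lemma piece_ncard (h n : ℕ) (u d : ℕ) (hu : 1 ≤ u) (hd : 1 ≤ d) :
    (piece r k h n (u, d)).ncard =
      if d ≤ h + u ∧ Bset r k d then c r k (h + u - d) (n - u) else 0 := by
  unfold piece c
  split
  · apply Set.ncard_image_of_injOn
    intro t ht t' ht' heq
    exact (comp_inj hu hu hd hd ht.2.2.2.1 ht'.2.2.2.1 heq).2.2
  · simp

lemma master (hk : 1 ≤ k) (hkr : k ≤ r) (h n : ℕ) (hn : 1 ≤ n) :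
    c r k h n = ∑ u ∈ Finset.Icc (r+1) n, ∑ d ∈ Finset.Icc 1 (h+u),
      if Bset r k d then c r k (h + u - d) (n - u) else 0 := by
  have hc : c r k h n = (CSet r k h n).ncard := rfl
  rw [hc, cset_eq_biUnion hk hkr h n hn]
  rw [ncard_biUnion _ _ (fun ud _ => piece_finite h n ud) ?disj]
  case disj =>
    intro ud hud ud' hud' hne
    simp only [Finset.mem_product, Finset.mem_Icc] at hud hud'
    exact piece_disjoint h n (by omega) (by omega) (by omega) (by omega) hne
  rw [Finset.sum_product]
  apply Finset.sum_congr rfl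
  intro u hu
  simp only [Finset.mem_Icc] at hu
  rw [← Finset.sum_subset (Finset.Icc_subset_Icc_right (by omega : h + u ≤ h + n))]
  · apply Finset.sum_congr rfl
    intro d hd
    simp only [Finset.mem_Icc] at hd
    rw [piece_ncard h n u d (by omega) (by omega)]
    by_cases hB : Bset r k d
    · rw [if_pos ⟨by omega, hB⟩, if_pos hB]
    · rw [if_neg (by tauto), if_neg hB]
  · intro d hd hd2
    simp only [Finset.mem_Icc] at hd hd2
    rw [piece_ncard h n u d (by omega) (by omega), if_neg (by omega)]

end S16

namespace S16

lemma heightAt_nil (i : ℕ) : heightAt [] i = 0 := by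
  unfold heightAt; simp

variable {r k : ℕ}

lemma cset_height_zero (h : ℕ) (hh : 1 ≤ h) : CSet r k h 0 = ∅ := by
  ext p
  simp only [Set.mem_empty_iff_false, iff_false]
  rintro ⟨h1, h2, h3, h4, h5⟩
  match p with
  | [] =>
    rw [heightAt_nil] at h2
    omega
  | false :: q => exact h4 (by simp)
  | true :: q => simp [List.count_cons] at h5

lemma cset_zero_zero : CSet r k 0 0 = {([] : List Bool)} := by
  ext p
  simp only [Set.mem_singleton_iff]
  constructor
  · rintro ⟨h1, h2, h3, h4, h5⟩
    have h6 := count_false_of_mem ⟨h1, h2, h3, h4, h5⟩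
    have := length_eq_counts p
    have hlen : p.length = 0 := by omega
    exact List.length_eq_zero_iff.1 hlen
  · rintro rfl
    refine ⟨fun i => by rw [heightAt_nil]; simp, by rw [heightAt_nil]; simp, ⟨?_, ?_⟩, ?_, rfl⟩
    · rintro j hj1 hj2 ⟨i, hT, -, -⟩
      have := hT 0 hj1
      simp at this
    · rintro j hj1 hj2 ⟨i, hT, -, -⟩
      have := hT 0 (by omega)
      simp at this
    · intro hbad
      simp [StartOK] at hbad

lemma c_height_zero (h : ℕ) (hh : 1 ≤ h) : c r k h 0 = 0 := by
  rw [c, cset_height_zero h hh, Set.ncard_empty]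

lemma c_zero_zero : c r k 0 0 = 1 := by
  rw [c, cset_zero_zero, Set.ncard_singleton]

lemma master' (hk : 1 ≤ k) (hkr : k ≤ r) (h ν : ℕ) (hh : 1 ≤ h) :
    c r k h ν = ∑ u ∈ Finset.Icc (r+1) ν, ∑ d ∈ Finset.Icc 1 (h+u),
      if Bset r k d then c r k (h + u - d) (ν - u) else 0 := by
  rcases Nat.eq_zero_or_pos ν with rfl | hν
  · rw [c_height_zero h hh, Finset.Icc_eq_empty (by omega), Finset.sum_empty]
  · exact master hk hkr h ν hν

lemma master0 (hk : 1 ≤ k) (hkr : k ≤ r) (ν : ℕ) :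
    c r k 0 ν = (if ν = 0 then 1 else 0) + ∑ u ∈ Finset.Icc (r+1) ν, ∑ d ∈ Finset.Icc 1 u,
      if Bset r k d then c r k (u - d) (ν - u) else 0 := by
  rcases Nat.eq_zero_or_pos ν with rfl | hν
  · rw [c_zero_zero, Finset.Icc_eq_empty (by omega), Finset.sum_empty, if_pos rfl]
    simp
  · rw [if_neg (by omega), zero_add]
    have := master hk hkr 0 ν hν
    simpa using this

/-- pull an `if` out of a sum -/
lemma sum_if_pull {s : Finset ℕ} (P : Prop) [Decidable P] (f : ℕ → ℕ) :
    ∑ m ∈ s, (if P then f m else 0) = if P then ∑ m ∈ s, f m else 0 := by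
  split_ifs <;> simp

lemma extend_range {N M : ℕ} (hMN : M ≤ N) (g : ℕ → ℕ) :
    ∑ m ∈ Finset.range (M+1), g m = ∑ m ∈ Finset.range (N+1), if m ≤ M then g m else 0 :=
  calc ∑ m ∈ Finset.range (M+1), g m
      = ∑ m ∈ Finset.range (M+1), (if m ≤ M then g m else 0) := by
        apply Finset.sum_congr rfl
        intro m hm
        simp only [Finset.mem_range] at hm
        rw [if_pos (by omega)]
    _ = ∑ m ∈ Finset.range (N+1), (if m ≤ M then g m else 0) := by
        apply Finset.sum_subset
        · intro x hx
          simp only [Finset.mem_range] at hx ⊢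
          omega
        · intro x hx hx2
          simp only [Finset.mem_range] at hx hx2
          rw [if_neg (by omega)]

lemma extend_Icc {aa N M : ℕ} (hMN : M ≤ N) (g : ℕ → ℕ) :
    ∑ u ∈ Finset.Icc aa M, g u = ∑ u ∈ Finset.Icc aa N, if u ≤ M then g u else 0 :=
  calc ∑ u ∈ Finset.Icc aa M, g u
      = ∑ u ∈ Finset.Icc aa M, (if u ≤ M then g u else 0) := by
        apply Finset.sum_congr rfl
        intro u hu
        simp only [Finset.mem_Icc] at hu
        rw [if_pos (by omega)]
    _ = ∑ u ∈ Finset.Icc aa N, (if u ≤ M then g u else 0) := by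
        apply Finset.sum_subset (Finset.Icc_subset_Icc_right hMN)
        intro x hx hx2
        simp only [Finset.mem_Icc] at hx hx2
        rw [if_neg (by omega)]

lemma sum_swap_aux (n aa : ℕ) (f : ℕ → ℕ → ℕ) :
    ∑ m ∈ Finset.range (n+1), ∑ u ∈ Finset.Icc aa (n-m), f m u
      = ∑ u ∈ Finset.Icc aa n, ∑ m ∈ Finset.range (n-u+1), f m u := by
  have L : ∀ m ∈ Finset.range (n+1), ∑ u ∈ Finset.Icc aa (n-m), f m u
      = ∑ u ∈ Finset.Icc aa n, if u ≤ n - m then f m u else 0 := by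
    intro m hm
    exact extend_Icc (by omega) _
  rw [Finset.sum_congr rfl L, Finset.sum_comm]
  apply Finset.sum_congr rfl
  intro u hu
  simp only [Finset.mem_Icc] at hu
  rw [extend_range (by omega : n - u ≤ n)]
  apply Finset.sum_congr rfl
  intro m hm
  simp only [Finset.mem_range] at hm
  by_cases hc : u ≤ n - m
  · rw [if_pos hc, if_pos (by omega)]
  · rw [if_neg hc, if_neg (by omega)]

lemma delta_sum (n : ℕ) (A : ℕ → ℕ) :
    ∑ m ∈ Finset.range (n+1), A m * (if n - m = 0 then 1 else 0) = A n := by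
  rw [Finset.sum_eq_single n]
  · rw [if_pos (by omega), mul_one]
  · intro m hm hmn
    simp only [Finset.mem_range] at hm
    rw [if_neg (by omega), mul_zero]
  · intro hn
    simp at hn

end S16

namespace S16

variable {r k : ℕ}

lemma L12 (hk : 1 ≤ k) (hkr : k ≤ r) (n : ℕ) :
    (∀ h, 1 ≤ h → c r k (h+1) n = ∑ m ∈ Finset.range (n+1), c r k 0 m * c r k h (n-m)) ∧
    (c r k 1 n + c r k 0 n = ∑ m ∈ Finset.range (n+1), c r k 0 m * c r k 0 (n-m)) := by
  induction n using Nat.strong_induction_on with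
  | _ n IH =>
  rcases Nat.eq_zero_or_pos n with rfl | hn
  · constructor
    · intro h hh
      rw [c_height_zero (h+1) (by omega)]
      simp [c_height_zero h hh]
    · rw [c_height_zero 1 le_rfl, c_zero_zero]
      simp [c_zero_zero]
  have key : ∀ h, 1 ≤ h →
      ∑ m ∈ Finset.range (n+1), c r k 0 m * c r k h (n-m)
        = ∑ u ∈ Finset.Icc (r+1) n,
            ((∑ d ∈ Finset.Icc 1 (h+u-1), if Bset r k d then c r k (h+u-d+1) (n-u) else 0)
              + (c r k 1 (n-u) + c r k 0 (n-u))) := by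
    intro h hh
    have step1 : ∀ m ∈ Finset.range (n+1),
        c r k 0 m * c r k h (n-m)
          = ∑ u ∈ Finset.Icc (r+1) (n-m), ∑ d ∈ Finset.Icc 1 (h+u),
              if Bset r k d then c r k 0 m * c r k (h+u-d) (n-u-m) else 0 := by
      intro m hm
      rw [master' hk hkr h (n-m) hh, Finset.mul_sum]
      apply Finset.sum_congr rfl; intro u hu
      rw [Finset.mul_sum]
      apply Finset.sum_congr rfl; intro d hd
      rw [mul_ite, mul_zero, show n - m - u = n - u - m from by omega]
    calc ∑ m ∈ Finset.range (n+1), c r k 0 m * c r k h (n-m)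
        = ∑ m ∈ Finset.range (n+1), ∑ u ∈ Finset.Icc (r+1) (n-m), ∑ d ∈ Finset.Icc 1 (h+u),
            (if Bset r k d then c r k 0 m * c r k (h+u-d) (n-u-m) else 0) :=
          Finset.sum_congr rfl step1
      _ = ∑ u ∈ Finset.Icc (r+1) n, ∑ m ∈ Finset.range (n-u+1), ∑ d ∈ Finset.Icc 1 (h+u),
            (if Bset r k d then c r k 0 m * c r k (h+u-d) (n-u-m) else 0) :=
          sum_swap_aux n (r+1) _
      _ = ∑ u ∈ Finset.Icc (r+1) n,
            ((∑ d ∈ Finset.Icc 1 (h+u-1), if Bset r k d then c r k (h+u-d+1) (n-u) else 0)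
              + (c r k 1 (n-u) + c r k 0 (n-u))) := by
          apply Finset.sum_congr rfl
          intro u hu
          simp only [Finset.mem_Icc] at hu
          have hnu : n - u < n := by omega
          rw [Finset.sum_comm]
          have step2 : ∀ d ∈ Finset.Icc 1 (h+u),
              (∑ m ∈ Finset.range (n-u+1),
                if Bset r k d then c r k 0 m * c r k (h+u-d) (n-u-m) else 0)
                = if Bset r k d
                    then (∑ m ∈ Finset.range (n-u+1), c r k 0 m * c r k (h+u-d) (n-u-m))
                    else 0 :=
            fun d _ => sum_if_pull _ _
          have hsplit : Finset.Icc 1 (h+u) = Finset.Icc 1 ((h+u-1)+1) := by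
            congr 1; omega
          rw [Finset.sum_congr rfl step2, hsplit, Finset.sum_Icc_succ_top (by omega)]
          congr 1
          · apply Finset.sum_congr rfl
            intro d hd
            simp only [Finset.mem_Icc] at hd
            by_cases hB : Bset r k d
            · rw [if_pos hB, if_pos hB]
              exact ((IH (n-u) hnu).1 (h+u-d) (by omega)).symm
            · rw [if_neg hB, if_neg hB]
          · rw [if_pos (show Bset r k (h+u-1+1) from Or.inr (by omega)),
              show h+u-(h+u-1+1) = 0 from by omega]
            exact ((IH (n-u) hnu).2).symm
  constructor
  · -- L1
    intro h hh
    rw [key h hh, master' hk hkr (h+1) n (by omega)]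
    apply Finset.sum_congr rfl
    intro u hu
    simp only [Finset.mem_Icc] at hu
    rw [show h+1+u = ((h+u-1)+1)+1 from by omega,
      Finset.sum_Icc_succ_top (by omega), Finset.sum_Icc_succ_top (by omega), add_assoc]
    congr 1
    · apply Finset.sum_congr rfl
      intro d hd
      simp only [Finset.mem_Icc] at hd
      by_cases hB : Bset r k d
      · rw [if_pos hB, if_pos hB, show (h+u-1+1)+1-d = h+u-d+1 from by omega]
      · rw [if_neg hB, if_neg hB]
    · rw [if_pos (show Bset r k (h+u-1+1) from Or.inr (by omega)),
        if_pos (show Bset r k (h+u-1+1+1) from Or.inr (by omega)),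
        show h+u-1+1+1 - (h+u-1+1) = 1 from by omega, Nat.sub_self]
  · -- L2
    have step1 : ∀ m ∈ Finset.range (n+1),
        c r k 0 m * c r k 0 (n-m)
          = c r k 0 m * (if n - m = 0 then 1 else 0) +
            ∑ u ∈ Finset.Icc (r+1) (n-m), ∑ d ∈ Finset.Icc 1 u,
              (if Bset r k d then c r k 0 m * c r k (u-d) (n-u-m) else 0) := by
      intro m hm
      rw [master0 hk hkr (n-m), mul_add, Finset.mul_sum]
      congr 1
      apply Finset.sum_congr rfl; intro u hu
      rw [Finset.mul_sum]
      apply Finset.sum_congr rfl; intro d hd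
      rw [mul_ite, mul_zero, show n - m - u = n - u - m from by omega]
    rw [Finset.sum_congr rfl step1, Finset.sum_add_distrib, delta_sum n (fun m => c r k 0 m)]
    have swap2 : ∑ m ∈ Finset.range (n+1), ∑ u ∈ Finset.Icc (r+1) (n-m), ∑ d ∈ Finset.Icc 1 u,
            (if Bset r k d then c r k 0 m * c r k (u-d) (n-u-m) else 0)
        = ∑ u ∈ Finset.Icc (r+1) n, ∑ m ∈ Finset.range (n-u+1), ∑ d ∈ Finset.Icc 1 u,
            (if Bset r k d then c r k 0 m * c r k (u-d) (n-u-m) else 0) :=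
      sum_swap_aux n (r+1) _
    rw [swap2]
    have expand : ∑ u ∈ Finset.Icc (r+1) n, ∑ m ∈ Finset.range (n-u+1), ∑ d ∈ Finset.Icc 1 u,
            (if Bset r k d then c r k 0 m * c r k (u-d) (n-u-m) else 0)
        = ∑ u ∈ Finset.Icc (r+1) n,
            ((∑ d ∈ Finset.Icc 1 (u-1), if Bset r k d then c r k (u-d+1) (n-u) else 0)
              + (c r k 1 (n-u) + c r k 0 (n-u))) := by
      apply Finset.sum_congr rfl
      intro u hu
      simp only [Finset.mem_Icc] at hu
      have hnu : n - u < n := by omega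
      rw [Finset.sum_comm]
      have step2 : ∀ d ∈ Finset.Icc 1 u,
          (∑ m ∈ Finset.range (n-u+1),
            if Bset r k d then c r k 0 m * c r k (u-d) (n-u-m) else 0)
            = if Bset r k d
                then (∑ m ∈ Finset.range (n-u+1), c r k 0 m * c r k (u-d) (n-u-m))
                else 0 :=
        fun d _ => sum_if_pull _ _
      have hsplit : Finset.Icc 1 u = Finset.Icc 1 ((u-1)+1) := by
        congr 1; omega
      rw [Finset.sum_congr rfl step2, hsplit, Finset.sum_Icc_succ_top (by omega)]
      congr 1
      · apply Finset.sum_congr rfl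
        intro d hd
        simp only [Finset.mem_Icc] at hd
        by_cases hB : Bset r k d
        · rw [if_pos hB, if_pos hB]
          exact ((IH (n-u) hnu).1 (u-d) (by omega)).symm
        · rw [if_neg hB, if_neg hB]
      · rw [if_pos (show Bset r k (u-1+1) from Or.inr (by omega)),
          show u - (u-1+1) = 0 from by omega]
        exact ((IH (n-u) hnu).2).symm
    rw [expand]
    -- now goal: c 1 n + c 0 n = c 0 n + ∑_u [...]
    have lhs1 : c r k 1 n = ∑ u ∈ Finset.Icc (r+1) n,
        ((∑ d ∈ Finset.Icc 1 (u-1), if Bset r k d then c r k (u-d+1) (n-u) else 0)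
          + (c r k 1 (n-u) + c r k 0 (n-u))) := by
      rw [master' hk hkr 1 n le_rfl]
      apply Finset.sum_congr rfl
      intro u hu
      simp only [Finset.mem_Icc] at hu
      rw [show 1+u = ((u-1)+1)+1 from by omega,
        Finset.sum_Icc_succ_top (by omega), Finset.sum_Icc_succ_top (by omega), add_assoc]
      congr 1
      · apply Finset.sum_congr rfl
        intro d hd
        simp only [Finset.mem_Icc] at hd
        by_cases hB : Bset r k d
        · rw [if_pos hB, if_pos hB, show (u-1+1)+1-d = u-d+1 from by omega]
        · rw [if_neg hB, if_neg hB]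
      · rw [if_pos (show Bset r k (u-1+1) from Or.inr (by omega)),
          if_pos (show Bset r k (u-1+1+1) from Or.inr (by omega)),
          show u-1+1+1 - (u-1+1) = 1 from by omega, Nat.sub_self]
    rw [lhs1]
    ring

end S16

namespace S16

noncomputable def Tser (r k h : ℕ) : PowerSeries ℕ := PowerSeries.mk (c r k h)

variable {r k : ℕ}

lemma coeff_Tser (h n : ℕ) : PowerSeries.coeff n (Tser r k h) = c r k h n :=
  PowerSeries.coeff_mk n _

lemma mulP (hk : 1 ≤ k) (hkr : k ≤ r) (h : ℕ) (hh : 1 ≤ h) :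
    Tser r k (h+1) = Tser r k 0 * Tser r k h := by
  ext n
  rw [PowerSeries.coeff_mul, Finset.Nat.sum_antidiagonal_eq_sum_range_succ_mk]
  simp only [coeff_Tser]
  exact (L12 hk hkr n).1 h hh

lemma sqP (hk : 1 ≤ k) (hkr : k ≤ r) :
    Tser r k 1 + Tser r k 0 = Tser r k 0 * Tser r k 0 := by
  ext n
  rw [map_add, PowerSeries.coeff_mul, Finset.Nat.sum_antidiagonal_eq_sum_range_succ_mk]
  simp only [coeff_Tser]
  exact (L12 hk hkr n).2

lemma powT (hk : 1 ≤ k) (hkr : k ≤ r) (g : ℕ) (hg : 1 ≤ g) :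
    Tser r k g + (Tser r k 0)^g = (Tser r k 0)^(g+1) := by
  induction g, hg using Nat.le_induction with
  | base =>
    rw [pow_one]
    rw [show (Tser r k 0)^(1+1) = Tser r k 0 * Tser r k 0 from by ring]
    exact sqP hk hkr
  | succ g hg IH =>
    calc Tser r k (g+1) + (Tser r k 0)^(g+1)
        = Tser r k 0 * (Tser r k g + (Tser r k 0)^g) := by
          rw [mulP hk hkr g hg]; ring
      _ = Tser r k 0 * (Tser r k 0)^(g+1) := by rw [IH]
      _ = (Tser r k 0)^(g+1+1) := by ring

noncomputable def Rser (r k u : ℕ) : PowerSeries ℕ :=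
  ∑ d ∈ Finset.Icc 1 u, if Bset r k d then Tser r k (u-d) else 0

lemma Rstep (hk : 1 ≤ k) (hkr : k ≤ r) (u : ℕ) (hu : r + 1 ≤ u) :
    Rser r k (u+1) = Tser r k 0 * Rser r k u := by
  have hu1 : 1 ≤ u := by omega
  unfold Rser
  rw [Finset.mul_sum]
  have rhs : ∀ d ∈ Finset.Icc 1 u,
      (Tser r k 0 * if Bset r k d then Tser r k (u-d) else 0)
        = if Bset r k d then Tser r k 0 * Tser r k (u-d) else 0 := by
    intro d hd
    rw [mul_ite, mul_zero]
  rw [Finset.sum_congr rfl rhs]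
  rw [Finset.sum_Icc_succ_top (by omega : 1 ≤ u + 1)]
  have hsplit : Finset.Icc 1 u = Finset.Icc 1 ((u-1)+1) := by congr 1; omega
  rw [hsplit, Finset.sum_Icc_succ_top (by omega : 1 ≤ (u-1) + 1),
    Finset.sum_Icc_succ_top (by omega : 1 ≤ (u-1) + 1)]
  rw [if_pos (show Bset r k (u+1) from Or.inr (by omega)),
    if_pos (show Bset r k (u-1+1) from Or.inr (by omega)),
    if_pos (show Bset r k (u-1+1) from Or.inr (by omega)),
    show u + 1 - (u-1+1) = 1 from by omega, show u - (u-1+1) = 0 from by omega,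
    Nat.sub_self]
  have hterm : ∀ d ∈ Finset.Icc 1 (u-1),
      (if Bset r k d then Tser r k (u+1-d) else 0)
        = if Bset r k d then Tser r k 0 * Tser r k (u-d) else 0 := by
    intro d hd
    simp only [Finset.mem_Icc] at hd
    by_cases hB : Bset r k d
    · rw [if_pos hB, if_pos hB, show u+1-d = (u-d)+1 from by omega, mulP hk hkr (u-d) (by omega)]
    · rw [if_neg hB, if_neg hB]
  rw [Finset.sum_congr rfl hterm, add_assoc]
  congr 1
  rw [← sqP hk hkr]

lemma Rpow (hk : 1 ≤ k) (hkr : k ≤ r) (j : ℕ) :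
    Rser r k (r+1+j) = (Tser r k 0)^j * Rser r k (r+1) := by
  induction j with
  | zero => simp
  | succ j IH =>
    rw [show r+1+(j+1) = (r+1+j)+1 from by omega, Rstep hk hkr (r+1+j) (by omega), IH]
    ring

lemma Ra_lemma (hk : 1 ≤ k) (hkr : k ≤ r) :
    Rser r k (r+1) + (Tser r k 0)^(r+1-k) = (Tser r k 0)^(r+1) + Tser r k 0 := by
  have step1 : Rser r k (r+1)
      = (∑ d ∈ Finset.Icc 1 k, Tser r k (r+1-d)) + Tser r k 0 := by
    unfold Rser
    rw [Finset.sum_Icc_succ_top (by omega : 1 ≤ r + 1),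
      if_pos (show Bset r k (r+1) from Or.inr le_rfl), Nat.sub_self]
    congr 1
    rw [← Finset.sum_subset (Finset.Icc_subset_Icc_right hkr)]
    · apply Finset.sum_congr rfl
      intro d hd
      simp only [Finset.mem_Icc] at hd
      rw [if_pos (show Bset r k d from Or.inl ⟨hd.1, hd.2⟩)]
    · intro d hd hd2
      simp only [Finset.mem_Icc] at hd hd2
      rw [if_neg (by rintro (⟨-, h⟩ | h) <;> omega)]
  have tele : ∀ j, j ≤ k →
      (∑ d ∈ Finset.Icc 1 j, Tser r k (r+1-d)) + (Tser r k 0)^(r+1-j)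
        = (Tser r k 0)^(r+1) := by
    intro j
    induction j with
    | zero => intro _; simp
    | succ j IH =>
      intro hjk
      rw [Finset.sum_Icc_succ_top (by omega : 1 ≤ j + 1), add_assoc,
        show r+1-(j+1) = r-j from by omega]
      have hg : Tser r k (r-j) + (Tser r k 0)^(r-j) = (Tser r k 0)^(r-j+1) := by
        exact powT hk hkr (r-j) (by omega)
      rw [hg, show r-j+1 = r+1-j from by omega]
      exact IH (by omega)
  rw [step1]
  calc (∑ d ∈ Finset.Icc 1 k, Tser r k (r+1-d)) + Tser r k 0 + (Tser r k 0)^(r+1-k)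
      = ((∑ d ∈ Finset.Icc 1 k, Tser r k (r+1-d)) + (Tser r k 0)^(r+1-k)) + Tser r k 0 := by
        ring
    _ = (Tser r k 0)^(r+1) + Tser r k 0 := by rw [tele k le_rfl]

end S16

namespace S16

noncomputable def Sser (r k : ℕ) : PowerSeries ℕ :=
  PowerSeries.mk fun n => ∑ u ∈ Finset.Icc (r+1) n, PowerSeries.coeff (n-u) (Rser r k u)

variable {r k : ℕ}

lemma coeff_Sser (m : ℕ) : PowerSeries.coeff m (Sser r k)
    = ∑ u ∈ Finset.Icc (r+1) m, PowerSeries.coeff (m-u) (Rser r k u) :=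
  PowerSeries.coeff_mk m _

lemma coeff_Rser (u ν : ℕ) : PowerSeries.coeff ν (Rser r k u)
    = ∑ d ∈ Finset.Icc 1 u, if Bset r k d then c r k (u-d) ν else 0 := by
  unfold Rser
  rw [map_sum]
  apply Finset.sum_congr rfl
  intro d hd
  rw [apply_ite (PowerSeries.coeff ν), map_zero, coeff_Tser]

lemma PeqS (hk : 1 ≤ k) (hkr : k ≤ r) : Tser r k 0 = 1 + Sser r k := by
  ext n
  rw [map_add, PowerSeries.coeff_one, coeff_Tser, coeff_Sser, master0 hk hkr n]
  congr 1
  apply Finset.sum_congr rfl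
  intro u hu
  rw [coeff_Rser]

lemma Seq (hk : 1 ≤ k) (hkr : k ≤ r) :
    Sser r k = PowerSeries.X^(r+1) * Rser r k (r+1)
      + PowerSeries.X * (Tser r k 0 * Sser r k) := by
  ext n
  rw [map_add, coeff_Sser,
    show (PowerSeries.X : PowerSeries ℕ)^(r+1) * Rser r k (r+1)
      = Rser r k (r+1) * PowerSeries.X^(r+1) from mul_comm _ _,
    PowerSeries.coeff_mul_X_pow',
    show (PowerSeries.X : PowerSeries ℕ) * (Tser r k 0 * Sser r k)
      = (Tser r k 0 * Sser r k) * PowerSeries.X^1 from by ring,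
    PowerSeries.coeff_mul_X_pow']
  by_cases hn1 : 1 ≤ n
  · rw [if_pos hn1]
    have hPS : PowerSeries.coeff (n-1) (Tser r k 0 * Sser r k)
        = ∑ u ∈ Finset.Icc (r+1) (n-1), PowerSeries.coeff (n-1-u) (Rser r k (u+1)) := by
      rw [PowerSeries.coeff_mul, Finset.Nat.sum_antidiagonal_eq_sum_range_succ_mk]
      have e1 : ∀ m ∈ Finset.range ((n-1)+1),
          PowerSeries.coeff m (Tser r k 0) * PowerSeries.coeff ((n-1)-m) (Sser r k)
            = ∑ u ∈ Finset.Icc (r+1) ((n-1)-m),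
                c r k 0 m * PowerSeries.coeff ((n-1)-u-m) (Rser r k u) := by
        intro m hm
        rw [coeff_Tser, coeff_Sser, Finset.mul_sum]
        apply Finset.sum_congr rfl
        intro u hu
        rw [show n-1-m-u = n-1-u-m from by omega]
      rw [Finset.sum_congr rfl e1, sum_swap_aux (n-1) (r+1) _]
      apply Finset.sum_congr rfl
      intro u hu
      simp only [Finset.mem_Icc] at hu
      rw [Rstep hk hkr u hu.1, PowerSeries.coeff_mul,
        Finset.Nat.sum_antidiagonal_eq_sum_range_succ_mk]
      apply Finset.sum_congr rfl
      intro m hm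
      rw [coeff_Tser]
    rw [hPS]
    have reidx : ∑ u ∈ Finset.Icc (r+1) (n-1), PowerSeries.coeff (n-1-u) (Rser r k (u+1))
        = ∑ v ∈ Finset.Icc (r+2) n, PowerSeries.coeff (n-v) (Rser r k v) := by
      rw [show Finset.Icc (r+2) n = Finset.Icc (r+1+1) ((n-1)+1) from by congr 1; omega,
        ← Finset.map_add_right_Icc (r+1) (n-1) 1, Finset.sum_map]
      apply Finset.sum_congr rfl
      intro u hu
      simp only [Finset.mem_Icc] at hu
      simp only [addRightEmbedding_apply]
      rw [show n - (u+1) = n-1-u from by omega]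
    rw [reidx]
    by_cases hrn : r + 1 ≤ n
    · have hins : Finset.Icc (r+1) n = insert (r+1) (Finset.Icc (r+2) n) := by
        ext x; simp only [Finset.mem_Icc, Finset.mem_insert]; omega
      rw [hins, Finset.sum_insert (by simp only [Finset.mem_Icc]; omega), if_pos hrn]
    · rw [if_neg hrn, Finset.Icc_eq_empty (by omega : ¬ r+1 ≤ n),
        Finset.Icc_eq_empty (by omega : ¬ r+2 ≤ n)]
      simp
  · rw [if_neg (by omega), if_neg hn1, Finset.Icc_eq_empty (by omega)]
    simp

lemma set_eq (hk : 1 ≤ k) (hkr : k ≤ r) (n : ℕ) :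
    {p : List Bool | p.length = 2 * n ∧ IsDyck p ∧
      ((∀ j : ℕ, 1 ≤ j → j ≤ r → ¬ HasUpRun p j) ∧
        (∀ j : ℕ, k + 1 ≤ j → j ≤ r → ¬ HasDownRun p j))} = CSet r k 0 n := by
  ext p
  simp only [Set.mem_setOf_eq]
  constructor
  · rintro ⟨hlen, ⟨hd1, hd2⟩, hQ⟩
    have hcnt := length_eq_counts p
    have hend : (p.count true : ℤ) - p.count false = 0 := by
      have h' := hd2
      unfold heightAt at h'
      rw [List.take_length] at h'
      exact h'
    have hok : StartOK p := by
      intro hbad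
      rcases p with _ | ⟨b, q⟩
      · simp at hbad
      · have hb : b = false := by simpa using hbad
        subst hb
        have h1 := hd1 1
        unfold heightAt at h1
        simp at h1
    refine ⟨fun i => by have := hd1 i; simpa using this, by simpa using hd2, hQ, hok, ?_⟩
    omega
  · rintro ⟨h1, h2, h3, h4, h5⟩
    have h6 := count_false_of_mem (⟨h1, h2, h3, h4, h5⟩ : p ∈ CSet r k 0 n)
    have hcnt := length_eq_counts p
    refine ⟨by omega, ⟨fun i => by simpa using h1 i, by simpa using h2⟩, h3⟩

lemma genFun_eq (hk : 1 ≤ k) (hkr : k ≤ r) :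
    genFun (fun p => (∀ j : ℕ, 1 ≤ j → j ≤ r → ¬ HasUpRun p j) ∧
      (∀ j : ℕ, k + 1 ≤ j → j ≤ r → ¬ HasDownRun p j)) = Tser r k 0 := by
  ext m
  unfold genFun Tser
  rw [PowerSeries.coeff_mk, PowerSeries.coeff_mk, show c r k 0 m = (CSet r k 0 m).ncard from rfl,
    ← set_eq hk hkr m]

theorem final (hk : 1 ≤ k) (hkr : k ≤ r) :
    Tser r k 0 + PowerSeries.X * Tser r k 0
        + PowerSeries.X ^ (r + 1) * (Tser r k 0) ^ (r + 1 - k) =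
      1 + PowerSeries.X * (Tser r k 0) ^ 2 + PowerSeries.X ^ (r + 1) * Tser r k 0 +
        PowerSeries.X ^ (r + 1) * (Tser r k 0) ^ (r + 1) := by
  have e1 := PeqS hk hkr
  have e2 := Seq hk hkr
  have e3 := Ra_lemma hk hkr
  calc Tser r k 0 + PowerSeries.X * Tser r k 0
        + PowerSeries.X ^ (r + 1) * (Tser r k 0) ^ (r + 1 - k)
      = (1 + Sser r k) + PowerSeries.X * Tser r k 0
          + PowerSeries.X ^ (r + 1) * (Tser r k 0) ^ (r + 1 - k) := by
        nth_rewrite 1 [e1]; rfl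
    _ = (1 + (PowerSeries.X^(r+1) * Rser r k (r+1)
          + PowerSeries.X * (Tser r k 0 * Sser r k))) + PowerSeries.X * Tser r k 0
          + PowerSeries.X ^ (r + 1) * (Tser r k 0) ^ (r + 1 - k) := by
        rw [← e2]
    _ = 1 + PowerSeries.X * Tser r k 0 + PowerSeries.X * Tser r k 0 * Sser r k
          + PowerSeries.X ^ (r+1) * (Rser r k (r+1) + (Tser r k 0) ^ (r + 1 - k)) := by
        ring
    _ = 1 + PowerSeries.X * Tser r k 0 + PowerSeries.X * Tser r k 0 * Sser r k
          + PowerSeries.X ^ (r+1) * ((Tser r k 0) ^ (r+1) + Tser r k 0) := by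
        rw [e3]
    _ = 1 + PowerSeries.X * (Tser r k 0 * (1 + Sser r k))
          + PowerSeries.X ^ (r+1) * Tser r k 0
          + PowerSeries.X ^ (r+1) * (Tser r k 0) ^ (r+1) := by
        ring
    _ = 1 + PowerSeries.X * (Tser r k 0 * Tser r k 0)
          + PowerSeries.X ^ (r+1) * Tser r k 0
          + PowerSeries.X ^ (r+1) * (Tser r k 0) ^ (r+1) := by
        rw [← e1]
    _ = 1 + PowerSeries.X * (Tser r k 0) ^ 2 + PowerSeries.X ^ (r + 1) * Tser r k 0 +
        PowerSeries.X ^ (r + 1) * (Tser r k 0) ^ (r + 1) := by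
        ring

end S16

/-- For `1 ≤ k ≤ r` and `P` the generating function of Dyck paths with no up-run length in
`{1, …, r}` and no down-run length in `{k+1, …, r}`:
`P + zP + z^(r+1) P^(r+1−k) = 1 + zP² + z^(r+1) P + z^(r+1) P^(r+1)`. -/
theorem stmt16 (r k : ℕ) (hk : 1 ≤ k) (hkr : k ≤ r) :
    let P := genFun (fun p => (∀ j : ℕ, 1 ≤ j → j ≤ r → ¬ HasUpRun p j) ∧
      (∀ j : ℕ, k + 1 ≤ j → j ≤ r → ¬ HasDownRun p j))
    P + PowerSeries.X * P + PowerSeries.X ^ (r + 1) * P ^ (r + 1 - k) =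
      1 + PowerSeries.X * P ^ 2 + PowerSeries.X ^ (r + 1) * P +
        PowerSeries.X ^ (r + 1) * P ^ (r + 1) := by
  intro P
  have hP : P = S16.Tser r k 0 := S16.genFun_eq hk hkr
  rw [hP]
  exact S16.final hk hkr
end
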